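/- arXiv:2204.10991 — 7 statements merged into one kernel-verified Lean document; each statement's English description precedes it below -/
import Mathlib

section
/- Let 𝒜 be a locally finite L-structure, ℬ an L'-structure, and suppose 𝒜 is a semi-retract of ℬ via (g, f). Let A be a finite substructure of 𝒜 and let A' = ⟨g(A)⟩_ℬ be the substructure of ℬ generated by the image g(A). If d ≥ 1 is an integer such that ℬ →ᵉ (B₀)^{A'}_{r,d} for every finitely generated substructure B₀ of ℬ and every integer r ≥ 2, then 𝒜 →ᵉ (B)^A_{r,d} for every finite substructure B of 𝒜 and every integer r ≥ 2; that is, if A' has Ramsey degree for embeddings at most d in ℬ, then A has Ramsey degree for embeddings at most d in 𝒜. -/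
open FirstOrder FirstOrder.Language Set

/-- Two same-length tuples have the same quantifier-free type over ∅. -/
def SameQfType (L : FirstOrder.Language) (M : Type*) [L.Structure M] {n : ℕ}
    (x y : Fin n → M) : Prop :=
  ∀ φ : L.Formula (Fin n), φ.IsQF → (φ.Realize x ↔ φ.Realize y)

/-- A qftp-respecting injection between structures in possibly different languages. -/
def QftpRespecting (L L' : FirstOrder.Language) (M N : Type*) [L.Structure M] [L'.Structure N]
    (h : M → N) : Prop :=
  Function.Injective h ∧
    ∀ (n : ℕ) (x y : Fin n → M), SameQfType L M x y → SameQfType L' N (h ∘ x) (h ∘ y)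

/-- `(g, f)` is a semi-retraction between `M` and `N`: both maps are qftp-respecting
injections and `f ∘ g` is qftp-preserving (equivalently, an `L`-embedding of `M` into `M`). -/
def IsSemiRetraction (L L' : FirstOrder.Language) (M N : Type*)
    [L.Structure M] [L'.Structure N] (g : M → N) (f : N → M) : Prop :=
  QftpRespecting L L' M N g ∧ QftpRespecting L' L N M f ∧
    ∀ (n : ℕ) (x : Fin n → M), SameQfType L M x (f ∘ g ∘ x)

/-- `M` is locally finite: every finitely generated substructure is finite. -/
def StructLocallyFinite (L : FirstOrder.Language) (M : Type*) [L.Structure M] : Prop :=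
  ∀ S : L.Substructure M, S.FG → (S : Set M).Finite

/-- `M → (B)^A_{r,d}` for substructures. -/
def ArrowSub (L : FirstOrder.Language) (M : Type*) [L.Structure M]
    (A B : L.Substructure M) (r d : ℕ) : Prop :=
  ∀ c : L.Substructure M → Fin r, ∃ B' : L.Substructure M,
    Nonempty (B' ≃[L] B) ∧
      (c '' {A' : L.Substructure M | A' ≤ B' ∧ Nonempty (A' ≃[L] A)}).ncard ≤ d

/-- `M →ᵉ (B)^A_{r,d}` for embeddings. -/
def ArrowEmb (L : FirstOrder.Language) (M : Type*) [L.Structure M]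
    (A B : L.Substructure M) (r d : ℕ) : Prop :=
  ∀ c : (A ↪[L] M) → Fin r, ∃ h : B ↪[L] M,
    (c '' {j : A ↪[L] M | ∃ e : A ↪[L] B, j = h.comp e}).ncard ≤ d

/-- A structure is rigid if its only automorphism is the identity. -/
def IsRigidStructure (L : FirstOrder.Language) (M : Type*) [L.Structure M] : Prop :=
  ∀ σ : M ≃[L] M, ∀ x : M, σ x = x


section Aux

variable {L : FirstOrder.Language} {M : Type*} [L.Structure M]

lemma SameQfType.symm' {n : ℕ} {x y : Fin n → M} (H : SameQfType L M x y) :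
    SameQfType L M y x := fun φ hφ => (H φ hφ).symm

lemma SameQfType.trans' {n : ℕ} {x y z : Fin n → M} (H : SameQfType L M x y)
    (H' : SameQfType L M y z) : SameQfType L M x z := fun φ hφ => (H φ hφ).trans (H' φ hφ)

lemma SameQfType.term_eq {n : ℕ} {x y : Fin n → M} (H : SameQfType L M x y)
    {s t : L.Term (Fin n)} (h : s.realize x = t.realize x) : s.realize y = t.realize y := by
  have := H (s.equal t) (BoundedFormula.IsAtomic.equal _ _).isQF
  rw [Formula.realize_equal, Formula.realize_equal] at this
  exact this.mp h

lemma SameQfType.rel_iff {n : ℕ} {x y : Fin n → M} (H : SameQfType L M x y)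
    {k : ℕ} (R : L.Relations k) (ts : Fin k → L.Term (Fin n)) :
    Structure.RelMap R (fun i => (ts i).realize x) ↔
      Structure.RelMap R (fun i => (ts i).realize y) := by
  have := H (R.formula ts) (BoundedFormula.IsAtomic.rel _ _).isQF
  rw [Formula.realize_rel, Formula.realize_rel] at this
  exact this

lemma term_realize_mem_closure {n : ℕ} (y : Fin n → M) (t : L.Term (Fin n)) :
    t.realize y ∈ Substructure.closure L (Set.range y) := by
  induction t with
  | var i => exact Substructure.subset_closure (mem_range_self i)
  | func f ts ih => exact Substructure.fun_mem _ f _ ih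

lemma formula_realize_embedding {L : FirstOrder.Language} {P Q : Type*} [L.Structure P]
    [L.Structure Q] (e : P ↪[L] Q) {α : Type*} (φ : L.Formula α) (hφ : φ.IsQF) (u : α → P) :
    φ.Realize (⇑e ∘ u) ↔ φ.Realize u := by
  have h := hφ.realize_embedding e (v := u) (xs := default)
  have hd : (⇑e ∘ (default : Fin 0 → P)) = default := funext fun i => i.elim0
  rw [hd] at h
  exact h

/-- The key construction: a `SameQfType` relation between tuples yields an embedding of the
substructure generated by the first tuple, sending term values to term values. -/
lemma exists_embedding_of_sameQfType {n : ℕ} {x y : Fin n → M} (H : SameQfType L M x y)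
    {C : L.Substructure M} (hC : Substructure.closure L (Set.range x) = C) :
    ∃ E : C ↪[L] M,
      (∀ (a : C) (i : Fin n), x i = (a : M) → E a = y i) ∧
      ∀ a : C, (E a : M) ∈ Substructure.closure L (Set.range y) := by
  subst hC
  set S := Substructure.closure L (Set.range x) with hS
  -- every element of S is the realization of a term
  have hex : ∀ a : S, ∃ t : L.Term (Fin n), t.realize x = (a : M) := by
    rintro ⟨a, ha⟩
    obtain ⟨t, ht⟩ := Substructure.mem_closure_iff_exists_term.mp ha
    have hρ : ∀ v : Set.range x, ∃ i, x i = (v : M) := fun v => v.2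
    choose ρ hρ' using hρ
    refine ⟨t.relabel ρ, ?_⟩
    rw [Term.realize_relabel]
    have : (x ∘ ρ) = ((↑) : Set.range x → M) := funext fun v => hρ' v
    rw [this, ht]
  choose tm htm using hex
  have key : ∀ a b : S, (tm a).realize y = (tm b).realize y → (a : M) = (b : M) := by
    intro a b h
    rw [← htm a, ← htm b]
    exact H.symm'.term_eq h
  refine ⟨⟨⟨fun a => (tm a).realize y, ?_⟩, ?_, ?_⟩, ?_, ?_⟩
  · intro a b h
    exact Subtype.ext (key a b h)
  · intro k fi u
    show (tm (Structure.funMap fi u)).realize y = Structure.funMap fi fun i => (tm (u i)).realize y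
    have h1 : (Term.func fi (fun i => tm (u i))).realize x = (tm (Structure.funMap fi u)).realize x := by
      rw [htm]
      have := S.subtype.map_fun fi u
      rw [Substructure.coe_subtype] at this
      rw [this]
      simp only [Term.realize_func]
      congr 1
      funext i
      exact (htm (u i)).symm ▸ rfl
    have h2 := H.term_eq h1
    rw [← h2, Term.realize_func]
  · intro k R u
    show Structure.RelMap R (fun i => (tm (u i)).realize y) ↔ Structure.RelMap R u
    have h3 : Structure.RelMap R u ↔ Structure.RelMap R (fun i => (tm (u i)).realize x) := by
      have := S.subtype.map_rel R u
      rw [Substructure.coe_subtype] at this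
      have h4 : (fun i => (tm (u i)).realize x) = Subtype.val ∘ u := funext fun i => htm (u i)
      rw [← this, h4]
    rw [h3]
    exact (H.rel_iff R (fun i => tm (u i))).symm
  · intro a i hi
    show (tm a).realize y = y i
    have : (tm a).realize x = (Term.var i : L.Term (Fin n)).realize x := by
      rw [htm]; exact hi.symm
    exact H.term_eq this
  · intro a
    exact term_realize_mem_closure y (tm a)

lemma sqt_val_comp {C D : L.Substructure M} (e : C ↪[L] D) {n : ℕ} (u : Fin n → C) :
    SameQfType L M (fun i => (u i : M)) (fun i => ((e (u i) : D) : M)) := by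
  intro φ hφ
  have h1 : (fun i => ((u i : C) : M)) = ⇑C.subtype ∘ u := by
    funext i; simp [Substructure.coe_subtype]
  have h2 : (fun i => ((e (u i) : D) : M)) = ⇑D.subtype ∘ (⇑e ∘ u) := by
    funext i; simp [Substructure.coe_subtype]
  rw [h1, h2, formula_realize_embedding C.subtype φ hφ,
    formula_realize_embedding D.subtype φ hφ, formula_realize_embedding e φ hφ]

lemma exists_enum {S : Set M} (h : S.Finite) : ∃ n : ℕ, ∃ x : Fin n → M, Set.range x = S := by
  classical
  haveI := h.fintype
  refine ⟨Fintype.card S, fun i => ((Fintype.equivFin S).symm i : M), ?_⟩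
  have : (fun i => ((Fintype.equivFin S).symm i : M)) =
      ((↑) : S → M) ∘ (Fintype.equivFin S).symm := rfl
  rw [this, Set.range_comp, Equiv.range_eq_univ, Set.image_univ, Subtype.range_coe]

end Aux

section Aux2

variable {L L' : FirstOrder.Language} {M N : Type*} [L.Structure M] [L'.Structure N]

lemma sqt_through {g : M → N} {f : N → M} (hsr : IsSemiRetraction L L' M N g f)
    {n : ℕ} (x : Fin n → M) {C : L'.Substructure N} (j : C ↪[L'] N)
    (hmem : ∀ i, g (x i) ∈ C) :
    SameQfType L M x (fun i => f (j ⟨g (x i), hmem i⟩)) := by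
  have s1 := hsr.2.2 n x
  set u : Fin n → C := fun i => ⟨g (x i), hmem i⟩ with hu
  have s2 : SameQfType L' N (fun i => ((u i : N))) (fun i => j (u i)) := by
    intro φ hφ
    have h1 : (fun i => ((u i : C) : N)) = ⇑C.subtype ∘ u := rfl
    have h2 : (fun i => j (u i)) = ⇑j ∘ u := rfl
    rw [h1, h2, formula_realize_embedding C.subtype φ hφ, formula_realize_embedding j φ hφ]
  have s3 := hsr.2.1.2 n _ _ s2
  have e1 : (f ∘ fun i => ((u i : C) : N)) = f ∘ g ∘ x := rfl
  have e2 : (f ∘ fun i => j (u i)) = fun i => f (j ⟨g (x i), hmem i⟩) := rfl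
  rw [e1, e2] at s3
  exact s1.trans' s3

end Aux2


/-- Theorem 5.1 / `thm_transembd`: if `𝒜` is a locally finite semi-retract of
`ℬ` via `(g, f)` and `A' = ⟨g(A)⟩_ℬ` has Ramsey degree for embeddings at most `d` in `ℬ`, then
the finite substructure `A` has Ramsey degree for embeddings at most `d` in `𝒜`. -/
theorem semiRetraction_transfers_embedding_Ramsey_degree
    {L L' : FirstOrder.Language} {M N : Type*} [L.Structure M] [L'.Structure N]
    (g : M → N) (f : N → M)
    (hlf : StructLocallyFinite L M)
    (hsr : IsSemiRetraction L L' M N g f)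
    (A : L.Substructure M) (hAfin : (A : Set M).Finite)
    (d : ℕ) (hd : 1 ≤ d)
    (hdeg : ∀ B₀ : L'.Substructure N, B₀.FG → ∀ r : ℕ, 2 ≤ r →
      ArrowEmb L' N (Substructure.closure L' (g '' (A : Set M))) B₀ r d) :
    ∀ B : L.Substructure M, (B : Set M).Finite → ∀ r : ℕ, 2 ≤ r →
      ArrowEmb L M A B r d := by
  classical
  intro B hBfin r hr c
  set A' : L'.Substructure N := Substructure.closure L' (g '' (A : Set M)) with hA'
  obtain ⟨n, x, hxA⟩ := exists_enum hAfin
  obtain ⟨m, z, hzB⟩ := exists_enum hBfin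
  have hxmem : ∀ i, x i ∈ A := fun i => by
    have h := mem_range_self (f := x) i; rw [hxA] at h; exact h
  have hzmem : ∀ i, z i ∈ B := fun i => by
    have h := mem_range_self (f := z) i; rw [hzB] at h; exact h
  have hgxA' : ∀ i, g (x i) ∈ A' := fun i =>
    Substructure.subset_closure (Set.mem_image_of_mem g (hxmem i))
  have hclosA : Substructure.closure L (Set.range x) = A := by
    rw [hxA]; exact Substructure.closure_eq A
  have hclosB : Substructure.closure L (Set.range z) = B := by
    rw [hzB]; exact Substructure.closure_eq B
  have hclosA' : Substructure.closure L' (Set.range (fun i => g (x i))) = A' := by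
    have hr1 : Set.range (fun i => g (x i)) = g '' Set.range x := (Set.range_comp g x)
    rw [hr1, hxA]
  set B₀ : L'.Substructure N := Substructure.closure L' (g '' (B : Set M)) with hB₀
  have hgzB₀ : ∀ i, g (z i) ∈ B₀ := fun i =>
    Substructure.subset_closure (Set.mem_image_of_mem g (hzmem i))
  have hB₀fg : B₀.FG := Substructure.fg_closure (hBfin.image g)
  -- Φ : (A' ↪ N) → (A ↪ M)
  have hΦex : ∀ j' : A' ↪[L'] N, ∃ E : A ↪[L] M,
      ∀ (a : A) (i : Fin n), x i = (a : M) → E a = f (j' ⟨g (x i), hgxA' i⟩) := by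
    intro j'
    have hsq := sqt_through hsr x j' hgxA'
    obtain ⟨E, hE, _⟩ := exists_embedding_of_sameQfType hsq hclosA
    exact ⟨E, hE⟩
  choose Φ hΦ using hΦex
  obtain ⟨h', hh'⟩ := hdeg B₀ hB₀fg r hr (c ∘ Φ)
  -- H : B ↪ M
  have hsqB := sqt_through hsr z h' hgzB₀
  obtain ⟨H, hHspec, _⟩ := exists_embedding_of_sameQfType hsqB hclosB
  refine ⟨H, ?_⟩
  have key : ∀ e : A ↪[L] B, ∃ e' : A' ↪[L'] B₀, Φ (h'.comp e') = H.comp e := by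
    intro e
    set u : Fin n → A := fun i => ⟨x i, hxmem i⟩ with husig
    set w : Fin n → N := fun i => g ((e (u i) : M)) with hw
    have sq1 : SameQfType L M (fun i => (u i : M)) (fun i => ((e (u i) : B) : M)) :=
      sqt_val_comp e u
    have sq1' : SameQfType L M x (fun i => ((e (u i) : B) : M)) := by
      have hux : (fun i => ((u i : A) : M)) = x := rfl
      rwa [hux] at sq1
    have sq2 := hsr.1.2 n _ _ sq1'
    have e1 : (g ∘ x) = fun i => g (x i) := rfl
    have e2 : (g ∘ fun i => ((e (u i) : B) : M)) = w := rfl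
    rw [e1, e2] at sq2
    obtain ⟨E', hE'spec, hE'range⟩ := exists_embedding_of_sameQfType sq2 hclosA'
    have hwB₀ : ∀ i, w i ∈ B₀ := fun i =>
      Substructure.subset_closure (Set.mem_image_of_mem g (e (u i)).2)
    have hrange : ∀ a : A', E' a ∈ B₀ := by
      intro a
      refine Substructure.closure_le.mpr ?_ (hE'range a)
      rintro v ⟨i, rfl⟩
      exact hwB₀ i
    refine ⟨FirstOrder.Language.Embedding.codRestrict B₀ E' hrange, ?_⟩
    ext a
    obtain ⟨i, hi⟩ : (a : M) ∈ Set.range x := hxA.symm ▸ a.2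
    have hau : a = u i := Subtype.ext hi.symm
    -- LHS
    have hL := hΦ (h'.comp (FirstOrder.Language.Embedding.codRestrict B₀ E' hrange)) a i hi
    have hcod : FirstOrder.Language.Embedding.codRestrict B₀ E' hrange ⟨g (x i), hgxA' i⟩ = ⟨w i, hwB₀ i⟩ := by
      apply Subtype.ext
      rw [FirstOrder.Language.Embedding.codRestrict_apply']
      exact hE'spec ⟨g (x i), hgxA' i⟩ i rfl
    have hL2 : (h'.comp (FirstOrder.Language.Embedding.codRestrict B₀ E' hrange)) ⟨g (x i), hgxA' i⟩ =
        h' ⟨w i, hwB₀ i⟩ := by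
      rw [Embedding.comp_apply, hcod]
    -- RHS
    obtain ⟨i', hi'⟩ : ((e (u i) : B) : M) ∈ Set.range z := hzB.symm ▸ (e (u i)).2
    have hR := hHspec (e (u i)) i' hi'
    have hww : (⟨g (z i'), hgzB₀ i'⟩ : B₀) = ⟨w i, hwB₀ i⟩ := by
      apply Subtype.ext
      show g (z i') = w i
      rw [hi']
    calc (Φ (h'.comp (FirstOrder.Language.Embedding.codRestrict B₀ E' hrange))) a
        = f ((h'.comp (FirstOrder.Language.Embedding.codRestrict B₀ E' hrange)) ⟨g (x i), hgxA' i⟩) := hL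
      _ = f (h' ⟨w i, hwB₀ i⟩) := by rw [hL2]
      _ = f (h' ⟨g (z i'), hgzB₀ i'⟩) := by rw [hww]
      _ = H (e (u i)) := hR.symm
      _ = (H.comp e) a := by rw [hau]; rfl
  have hsub : c '' {j : A ↪[L] M | ∃ e : A ↪[L] B, j = H.comp e} ⊆
      (c ∘ Φ) '' {j' : A' ↪[L'] N | ∃ e' : A' ↪[L'] B₀, j' = h'.comp e'} := by
    rintro v ⟨j, ⟨e, rfl⟩, rfl⟩
    obtain ⟨e', he'⟩ := key e
    exact ⟨h'.comp e', ⟨e', rfl⟩, by simp [Function.comp, he']⟩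
  exact le_trans (Set.ncard_le_ncard hsub (Set.toFinite _)) hh'
end

section
/- Let 𝒜 be a locally finite L-structure and ℬ an L'-structure every finitely generated substructure of which is rigid, and suppose 𝒜 is a semi-retract of ℬ via (g, f). If ℬ has the Ramsey property, i.e. for every pair of finitely generated substructures A₀, B₀ of ℬ and every integer r ≥ 2 we have ℬ → (B₀)^{A₀}_r, then 𝒜 has the Ramsey property: for every pair of finite substructures A, B of 𝒜 and every integer r ≥ 2, 𝒜 → (B)^A_r. -/
open FirstOrder FirstOrder.Language

namespace SemiRetractAux

open Set FirstOrder.Language FirstOrder.Language.Structure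

variable {L : FirstOrder.Language} {M : Type*} [L.Structure M]

lemma sqt_symm {n : ℕ} {x y : Fin n → M} (h : SameQfType L M x y) : SameQfType L M y x :=
  fun φ hφ => (h φ hφ).symm

lemma sqt_trans {n : ℕ} {x y z : Fin n → M} (h1 : SameQfType L M x y)
    (h2 : SameQfType L M y z) : SameQfType L M x z :=
  fun φ hφ => (h1 φ hφ).trans (h2 φ hφ)

lemma emb_realize_qf_bd {N : Type*} [L.Structure N] (φ : M ↪[L] N) {α : Type*} {k : ℕ}
    {ψ : L.BoundedFormula α k} (hψ : ψ.IsQF) (v : α → M) (xs : Fin k → M) :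
    ψ.Realize (⇑φ ∘ v) (⇑φ ∘ xs) ↔ ψ.Realize v xs := by
  induction hψ with
  | falsum => exact Iff.rfl
  | of_isAtomic h =>
    cases h with
    | equal t₁ t₂ =>
      simp only [BoundedFormula.realize_bdEqual, ← Sum.comp_elim, HomClass.realize_term]
      exact ⟨fun e => φ.injective e, fun e => congrArg φ e⟩
    | rel R ts =>
      simp only [BoundedFormula.realize_rel, ← Sum.comp_elim, HomClass.realize_term]
      exact StrongHomClass.map_rel φ _ _
  | imp _ _ ih1 ih2 => simp only [BoundedFormula.realize_imp, ih1, ih2]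

lemma emb_realize_qf {N : Type*} [L.Structure N] (φ : M ↪[L] N) {α : Type*}
    {ψ : L.Formula α} (hψ : ψ.IsQF) (v : α → M) :
    ψ.Realize (⇑φ ∘ v) ↔ ψ.Realize v := by
  unfold Formula.Realize
  rw [Subsingleton.elim (default : Fin 0 → N) (⇑φ ∘ (default : Fin 0 → M))]
  exact emb_realize_qf_bd φ hψ v default

lemma sqt_subtype_equiv {S T : L.Substructure M} (e : S ≃[L] T) {n : ℕ} (v : Fin n → S) :
    SameQfType L M (fun i => (v i : M)) (fun i => ((e (v i) : T) : M)) := by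
  intro φ hφ
  have h1 : (fun i => (v i : M)) = ⇑S.subtype ∘ v := rfl
  have h2 : (fun i => ((e (v i) : T) : M)) = ⇑T.subtype ∘ (⇑e ∘ v) := rfl
  rw [h1, h2, emb_realize_qf S.subtype hφ v, emb_realize_qf T.subtype hφ (⇑e ∘ v)]
  exact (StrongHomClass.realize_formula e _).symm

lemma mem_closure_range_iff {n : ℕ} {x : Fin n → M} {z : M} :
    z ∈ Substructure.closure L (Set.range x) ↔ ∃ t : L.Term (Fin n), t.realize x = z := by
  rw [Substructure.mem_closure_iff_exists_term]
  constructor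
  · rintro ⟨t, rfl⟩
    refine ⟨t.relabel (fun s => Classical.choose s.2), ?_⟩
    rw [Term.realize_relabel]
    congr 1
    funext s
    exact Classical.choose_spec s.2
  · rintro ⟨t, rfl⟩
    exact ⟨t.relabel (fun i => ⟨x i, Set.mem_range_self i⟩), by rw [Term.realize_relabel]; rfl⟩

lemma realize_eq_of_sqt {n : ℕ} {x y : Fin n → M} (h : SameQfType L M x y)
    {t s : L.Term (Fin n)} (ht : t.realize x = s.realize x) : t.realize y = s.realize y := by
  have hq : (t.equal s).IsQF := (BoundedFormula.IsAtomic.equal _ _).isQF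
  have h2 := h (t.equal s) hq
  rw [Formula.realize_equal, Formula.realize_equal] at h2
  exact h2.mp ht

lemma exists_equiv_of_sqt {n : ℕ} {x y : Fin n → M} (h : SameQfType L M x y) :
    ∃ E : (Substructure.closure L (Set.range x)) ≃[L] (Substructure.closure L (Set.range y)),
      ∀ (t : L.Term (Fin n)) (hz : t.realize x ∈ Substructure.closure L (Set.range x)),
        ((E ⟨t.realize x, hz⟩ : Substructure.closure L (Set.range y)) : M) = t.realize y := by
  classical
  have hs := sqt_symm h
  have memx : ∀ t : L.Term (Fin n), t.realize x ∈ Substructure.closure L (Set.range x) :=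
    fun t => mem_closure_range_iff.2 ⟨t, rfl⟩
  have memy : ∀ t : L.Term (Fin n), t.realize y ∈ Substructure.closure L (Set.range y) :=
    fun t => mem_closure_range_iff.2 ⟨t, rfl⟩
  have hxe : ∀ z : Substructure.closure L (Set.range x),
      ∃ t : L.Term (Fin n), t.realize x = (z : M) := fun z => mem_closure_range_iff.1 z.2
  have hye : ∀ z : Substructure.closure L (Set.range y),
      ∃ t : L.Term (Fin n), t.realize y = (z : M) := fun z => mem_closure_range_iff.1 z.2
  choose tx htx using hxe
  choose ty hty using hye
  let F : Substructure.closure L (Set.range x) → Substructure.closure L (Set.range y) :=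
    fun z => ⟨(tx z).realize y, memy _⟩
  let G : Substructure.closure L (Set.range y) → Substructure.closure L (Set.range x) :=
    fun z => ⟨(ty z).realize x, memx _⟩
  have hF : ∀ (t : L.Term (Fin n)) (hz : t.realize x ∈ Substructure.closure L (Set.range x)),
      ((F ⟨t.realize x, hz⟩ : Substructure.closure L (Set.range y)) : M) = t.realize y :=
    fun t hz => realize_eq_of_sqt h (htx ⟨t.realize x, hz⟩)
  have hG : ∀ (t : L.Term (Fin n)) (hz : t.realize y ∈ Substructure.closure L (Set.range y)),
      ((G ⟨t.realize y, hz⟩ : Substructure.closure L (Set.range x)) : M) = t.realize x :=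
    fun t hz => realize_eq_of_sqt hs (hty ⟨t.realize y, hz⟩)
  refine ⟨⟨⟨F, G, ?_, ?_⟩, ?_, ?_⟩, hF⟩
  · rintro ⟨z, hz⟩
    obtain ⟨t, rfl⟩ := mem_closure_range_iff.1 hz
    apply Subtype.ext
    exact (hG (tx ⟨t.realize x, hz⟩) (memy _)).trans (htx ⟨t.realize x, hz⟩)
  · rintro ⟨z, hz⟩
    obtain ⟨t, rfl⟩ := mem_closure_range_iff.1 hz
    apply Subtype.ext
    exact (hF (ty ⟨t.realize y, hz⟩) (memx _)).trans (hty ⟨t.realize y, hz⟩)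
  · intro k fn v
    apply Subtype.ext
    have key : (tx (funMap fn v)).realize x = (Term.func fn (fun i => tx (v i))).realize x := by
      rw [htx]
      show funMap fn (fun i => ((v i : Substructure.closure L (Set.range x)) : M)) =
        funMap fn fun i => (tx (v i)).realize x
      congr 1
      funext i
      exact (htx (v i)).symm
    exact realize_eq_of_sqt h key
  · intro k R v
    have h1 : RelMap R (F ∘ v) ↔ RelMap R (fun i => (tx (v i)).realize y) := Iff.rfl
    have h2 : RelMap R v ↔ RelMap R (fun i => ((v i : Substructure.closure L (Set.range x)) : M)) :=
      Iff.rfl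
    have hq : ((R.formula (fun i => tx (v i))).IsQF) := (BoundedFormula.IsAtomic.rel _ _).isQF
    have h3 := h (R.formula (fun i => tx (v i))) hq
    rw [Formula.realize_rel, Formula.realize_rel] at h3
    rw [h1, h2, ← h3]
    constructor
    · intro hh
      convert hh using 2
      exact (htx _).symm
    · intro hh
      convert hh using 2
      exact htx _

lemma exists_enum {M' : Type*} {s : Set M'} (hs : s.Finite) :
    ∃ (n : ℕ) (a : Fin n → M'), Set.range a = s := by
  haveI := hs.fintype
  refine ⟨Fintype.card s, Subtype.val ∘ (Fintype.equivFin s).symm, ?_⟩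
  rw [Set.range_comp, Equiv.range_eq_univ, Set.image_univ, Subtype.range_coe]

end SemiRetractAux

/-- Corollary 5.4 / `cor_fmla_free`: if `𝒜` is a locally finite semi-retract of
`ℬ` via `(g, f)`, every finitely generated substructure of `ℬ` is rigid, and `ℬ` has the Ramsey
property, then `𝒜` has the Ramsey property. -/
theorem semiRetraction_transfers_RP_of_rigid
    {L L' : FirstOrder.Language} {M N : Type*} [L.Structure M] [L'.Structure N]
    (g : M → N) (f : N → M)
    (hlf : StructLocallyFinite L M)
    (hrigid : ∀ S : L'.Substructure N, S.FG → IsRigidStructure L' S)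
    (hsr : IsSemiRetraction L L' M N g f)
    (hRP : ∀ A₀ B₀ : L'.Substructure N, A₀.FG → B₀.FG → ∀ r : ℕ, 2 ≤ r →
      ArrowSub L' N A₀ B₀ r 1) :
    ∀ A B : L.Substructure M, (A : Set M).Finite → (B : Set M).Finite → ∀ r : ℕ, 2 ≤ r →
      ArrowSub L M A B r 1 := by
  classical
  obtain ⟨⟨ginj, gresp⟩, ⟨finj, fresp⟩, hcomp⟩ := hsr
  intro A B hA hB r hr c
  obtain ⟨n, a, ha⟩ := SemiRetractAux.exists_enum hA
  obtain ⟨m, b, hb⟩ := SemiRetractAux.exists_enum hB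
  have haA : ∀ i, a i ∈ A := by
    intro i
    have h0 : a i ∈ Set.range a := Set.mem_range_self i
    rw [ha] at h0
    exact h0
  have hbB : ∀ i, b i ∈ B := by
    intro i
    have h0 : b i ∈ Set.range b := Set.mem_range_self i
    rw [hb] at h0
    exact h0
  set A₀ : L'.Substructure N := Substructure.closure L' (Set.range (g ∘ a)) with hA₀def
  set B₀ : L'.Substructure N := Substructure.closure L' (Set.range (g ∘ b)) with hB₀def
  have hA₀fg : A₀.FG := Substructure.fg_closure (Set.finite_range _)
  have hB₀fg : B₀.FG := Substructure.fg_closure (Set.finite_range _)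
  have hA₀mem : ∀ i, g (a i) ∈ A₀ := fun i => Substructure.subset_closure (Set.mem_range_self i)
  let a₀ : Fin n → A₀ := fun i => ⟨g (a i), hA₀mem i⟩
  set c₀ : L'.Substructure N → Fin r := fun S =>
    if h : Nonempty (S ≃[L'] A₀) then
      c (Substructure.closure L (Set.range (fun i => f ((h.some.symm (a₀ i) : S) : N))))
    else ⟨0, by omega⟩ with hc₀def
  have hc₀ : ∀ (S : L'.Substructure N) (hne : Nonempty (S ≃[L'] A₀)),
      c₀ S = c (Substructure.closure L
        (Set.range (fun i => f ((hne.some.symm (a₀ i) : S) : N)))) := by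
    intro S hne
    rw [hc₀def]
    exact dif_pos hne
  obtain ⟨B₀', ⟨σ⟩, hcount⟩ := hRP A₀ B₀ hA₀fg hB₀fg r hr c₀
  have hgB : ∀ u : M, u ∈ B → g u ∈ B₀ := by
    intro u hu
    have : u ∈ Set.range b := by rw [hb]; exact hu
    obtain ⟨k, rfl⟩ := this
    exact Substructure.subset_closure ⟨k, rfl⟩
  let β : (u : M) → u ∈ B → M := fun u hu => f ((σ.symm ⟨g u, hgB u hu⟩ : B₀') : N)
  have fact1 : ∀ (k : ℕ) (x : Fin k → M) (hx : ∀ i, x i ∈ B),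
      SameQfType L M x (fun i => β (x i) (hx i)) := by
    intro k x hx
    have h1 : SameQfType L M x (f ∘ g ∘ x) := hcomp k x
    have h2 : SameQfType L' N (g ∘ x)
        (fun i => ((σ.symm ⟨g (x i), hgB _ (hx i)⟩ : B₀') : N)) :=
      SemiRetractAux.sqt_subtype_equiv σ.symm (fun i => (⟨g (x i), hgB _ (hx i)⟩ : B₀))
    have h3 := fresp k _ _ h2
    exact SemiRetractAux.sqt_trans h1 h3
  let βb : Fin m → M := fun i => β (b i) (hbB i)
  have hβb : SameQfType L M b βb := fact1 m b hbB
  obtain ⟨E, hE⟩ := SemiRetractAux.exists_equiv_of_sqt hβb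
  have hBc : Substructure.closure L (Set.range b) = B := by
    rw [hb]; exact Substructure.closure_eq B
  set B' : L.Substructure M := Substructure.closure L (Set.range βb) with hB'def
  have hB'sub : ∀ z : M, z ∈ B' → z ∈ Set.range βb := by
    intro z hz
    obtain ⟨t, ht⟩ := SemiRetractAux.mem_closure_range_iff.1 hz
    have htB : t.realize b ∈ B := t.realize_mem b hbB
    have : t.realize b ∈ Set.range b := by rw [hb]; exact htB
    obtain ⟨k, hk⟩ := this
    have hq : (t.equal (Term.var k)).IsQF :=
      (FirstOrder.Language.BoundedFormula.IsAtomic.equal _ _).isQF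
    have h4 := hβb (t.equal (Term.var k)) hq
    rw [Formula.realize_equal, Formula.realize_equal] at h4
    have h5 : t.realize βb = βb k := h4.mp hk.symm
    exact ⟨k, by rw [← h5, ht]⟩
  refine ⟨B', ⟨?_⟩, ?_⟩
  · rw [hBc] at E
    exact E.symm
  · have hsub : c '' {A' : L.Substructure M | A' ≤ B' ∧ Nonempty (A' ≃[L] A)} ⊆
        c₀ '' {S : L'.Substructure N | S ≤ B₀' ∧ Nonempty (S ≃[L'] A₀)} := by
      rintro v ⟨A', ⟨hA'le, ⟨χ⟩⟩, rfl⟩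
      let aA : Fin n → A := fun i => ⟨a i, haA i⟩
      let astar : Fin n → M := fun i => ((χ.symm (aA i) : A') : M)
      have hastar_mem : ∀ i, astar i ∈ A' := fun i => (χ.symm (aA i)).2
      have hsqt1 : SameQfType L M a astar := SemiRetractAux.sqt_subtype_equiv χ.symm aA
      have hchoice : ∀ i, ∃ k, βb k = astar i := fun i => hB'sub _ (hA'le (hastar_mem i))
      choose kk hkk using hchoice
      let a₁ : Fin n → M := fun i => b (kk i)
      have ha₁B : ∀ i, a₁ i ∈ B := fun i => hbB _
      have hsqt2 : SameQfType L M a₁ astar := by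
        have h0 := fact1 n a₁ ha₁B
        have he : (fun i => β (a₁ i) (ha₁B i)) = astar := funext fun i => hkk i
        rwa [he] at h0
      have hsqt3 : SameQfType L M a₁ a :=
        SemiRetractAux.sqt_trans hsqt2 (SemiRetractAux.sqt_symm hsqt1)
      have hga₁ : ∀ i, g (a₁ i) ∈ B₀ := fun i => hgB _ (ha₁B i)
      let usub : Fin n → B₀' := fun i => σ.symm ⟨g (a₁ i), hga₁ i⟩
      let u : Fin n → N := fun i => ((usub i : B₀') : N)
      have hu1 : SameQfType L' N (g ∘ a₁) u :=
        SemiRetractAux.sqt_subtype_equiv σ.symm (fun i => (⟨g (a₁ i), hga₁ i⟩ : B₀))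
      have hu2 : SameQfType L' N (g ∘ a) (g ∘ a₁) := gresp n a a₁ (SemiRetractAux.sqt_symm hsqt3)
      have hu : SameQfType L' N (g ∘ a) u := SemiRetractAux.sqt_trans hu2 hu1
      set S : L'.Substructure N := Substructure.closure L' (Set.range u) with hSdef
      obtain ⟨E₂, hE₂⟩ := SemiRetractAux.exists_equiv_of_sqt hu
      have hSle : S ≤ B₀' := by
        rw [hSdef, Substructure.closure_le]
        rintro z ⟨i, rfl⟩
        exact (usub i).2
      have hne : Nonempty (S ≃[L'] A₀) := ⟨(E₂ : ↥A₀ ≃[L'] ↥S).symm⟩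
      refine ⟨S, ⟨hSle, hne⟩, ?_⟩
      rw [hc₀ S hne]
      congr 1
      have hrig := hrigid A₀ hA₀fg
      have hsymmEq : ∀ z : A₀, hne.some.symm z = (E₂ : ↥A₀ ≃[L'] ↥S) z := by
        intro z
        have h1 : hne.some ((E₂ : ↥A₀ ≃[L'] ↥S) z) = z :=
          hrig (hne.some.comp (E₂ : ↥A₀ ≃[L'] ↥S)) z
        have h2 := congrArg hne.some.symm h1
        rw [FirstOrder.Language.Equiv.symm_apply_apply] at h2
        exact h2.symm
      have hpt : ∀ i, ((hne.some.symm (a₀ i) : S) : N) = u i := by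
        intro i
        rw [hsymmEq]
        exact hE₂ (Term.var i) (Substructure.subset_closure (Set.mem_range_self i))
      have hfu : ∀ i, f (u i) = astar i := fun i => hkk i
      have hfun : (fun i => f ((hne.some.symm (a₀ i) : S) : N)) = astar := by
        funext i
        rw [hpt i]
        exact hfu i
      rw [hfun]
      have hrange : Set.range astar = (A' : Set M) := by
        apply Set.eq_of_subset_of_subset
        · rintro z ⟨i, rfl⟩
          exact hastar_mem i
        · intro z hz
          have : ((χ ⟨z, hz⟩ : A) : M) ∈ Set.range a := by
            rw [ha]; exact (χ ⟨z, hz⟩).2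
          obtain ⟨i, hi⟩ := this
          refine ⟨i, ?_⟩
          have haAi : aA i = χ ⟨z, hz⟩ := Subtype.ext hi
          show ((χ.symm (aA i) : A') : M) = z
          rw [haAi, FirstOrder.Language.Equiv.symm_apply_apply]
      rw [hrange]
      exact Substructure.closure_eq A'
    calc (c '' {A' : L.Substructure M | A' ≤ B' ∧ Nonempty (A' ≃[L] A)}).ncard
        ≤ (c₀ '' {S : L'.Substructure N | S ≤ B₀' ∧ Nonempty (S ≃[L'] A₀)}).ncard :=
          Set.ncard_le_ncard hsub (Set.toFinite _)
      _ ≤ 1 := hcount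
end

section
/- Let B be a countable atomless Boolean algebra (a nontrivial Boolean algebra in which for every a with 0 < a there exists b with 0 < b < a), regarded as a structure in the language L_BA having binary function symbols for join and meet, a unary function symbol for complement, and constant symbols for 0 and 1. Let R be a countable structure in the language L_graph having a single binary relation symbol E, such that E is irreflexive and symmetric and R has the graph extension property: for any two disjoint finite sets U, W of elements of R there exists an element v ∉ U ∪ W with E(v,u) for all u ∈ U and ¬E(v,w) for all w ∈ W (so R is the countable random graph). Then R is a semi-retract of B: there exist qftp-respecting injections g : R → B and f : B → R such that f ∘ g is an L_graph-embedding of R into R. -/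
open FirstOrder FirstOrder.Language

/-- Function symbols of the language of Boolean algebras: constants `0`, `1`, unary
complementation, and binary join and meet. -/
inductive BAFunc : ℕ → Type
  | bot : BAFunc 0
  | top : BAFunc 0
  | compl : BAFunc 1
  | sup : BAFunc 2
  | inf : BAFunc 2

/-- The first-order language of Boolean algebras. -/
def LBA : FirstOrder.Language :=
  ⟨BAFunc, fun _ => Empty⟩

/-- The natural `LBA`-structure on a Boolean algebra. -/
def baStructure (B : Type*) [BooleanAlgebra B] : LBA.Structure B where
  funMap {n} f x :=
    match f, x with
    | .bot, _ => ⊥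
    | .top, _ => ⊤
    | .compl, x => (x 0)ᶜ
    | .sup, x => x 0 ⊔ x 1
    | .inf, x => x 0 ⊓ x 1
  RelMap {n} r _ := r.elim

section Cells

variable {B : Type*} [BooleanAlgebra B] {α : Type*} [Fintype α] [DecidableEq α]

/-- value of a term in a Boolean algebra -/
def bval (b : α → B) (t : LBA.Term α) : B := @Term.realize LBA B (baStructure B) α b t

/-- truth-value of a term under a Bool assignment -/
def tval (ε : α → Bool) (t : LBA.Term α) : Bool := @Term.realize LBA Bool (baStructure Bool) α ε t

def pcell (s : Finset α) (b : α → B) (ε : α → Bool) : B :=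
  s.inf fun i => if ε i then b i else (b i)ᶜ

lemma pcell_congr {s : Finset α} {b : α → B} {ε ε' : α → Bool}
    (h : ∀ i ∈ s, ε i = ε' i) : pcell s b ε = pcell s b ε' :=
  Finset.inf_congr rfl fun i hi => by rw [h i hi]

lemma sup_pcell (s : Finset α) (b : α → B) :
    (Finset.univ : Finset (α → Bool)).sup (pcell s b) = ⊤ := by
  classical
  induction s using Finset.induction_on with
  | empty =>
      have : pcell (∅ : Finset α) b (fun _ => true) = ⊤ := rfl
      exact le_antisymm le_top (this ▸ Finset.le_sup (Finset.mem_univ _))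
  | @insert a s ha ih =>
      refine le_antisymm le_top ?_
      rw [← ih]
      refine Finset.sup_le fun ε _ => ?_
      have h1 : pcell (insert a s) b (Function.update ε a true) = b a ⊓ pcell s b ε := by
        rw [pcell, Finset.inf_insert, Function.update_self]
        simp only [if_pos rfl]
        congr 1
        exact pcell_congr fun i hi => Function.update_of_ne (fun he : i = a => ha (he ▸ hi)) _ ε
      have h2 : pcell (insert a s) b (Function.update ε a false) = (b a)ᶜ ⊓ pcell s b ε := by
        rw [pcell, Finset.inf_insert, Function.update_self]
        rw [if_neg (by simp)]
        congr 1
        exact pcell_congr fun i hi => Function.update_of_ne (fun he : i = a => ha (he ▸ hi)) _ ε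
      have : pcell s b ε = (b a ⊓ pcell s b ε) ⊔ ((b a)ᶜ ⊓ pcell s b ε) := by
        rw [← inf_sup_right, sup_compl_eq_top, top_inf_eq]
      rw [this, ← h1, ← h2]
      exact sup_le (Finset.le_sup (Finset.mem_univ _)) (Finset.le_sup (Finset.mem_univ _))

/-- the key computation -/
lemma pcell_inf_bval (b : α → B) (t : LBA.Term α) (ε : α → Bool) :
    pcell Finset.univ b ε ⊓ bval b t = if tval ε t then pcell Finset.univ b ε else ⊥ := by
  induction t with
  | var i =>
      have hb : bval b (Term.var i) = b i := rfl
      have ht : tval ε (Term.var i) = ε i := rfl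
      rw [hb, ht]
      cases h : ε i with
      | true =>
          simp only [if_pos rfl]
          have : pcell Finset.univ b ε ≤ b i := by
            refine le_trans (Finset.inf_le (Finset.mem_univ i)) ?_
            rw [h]; simp
          exact inf_eq_left.mpr this
      | false =>
          simp only [Bool.false_eq_true, if_false]
          have : pcell Finset.univ b ε ≤ (b i)ᶜ := by
            refine le_trans (Finset.inf_le (Finset.mem_univ i)) ?_
            rw [h]; simp
          exact le_bot_iff.mp (le_trans (inf_le_inf_right _ this) (by simp))
  | func f ts ih =>
      cases f with
      | bot =>
          have hb : bval b (Term.func BAFunc.bot ts) = ⊥ := rfl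
          have ht : tval ε (Term.func BAFunc.bot ts) = false := rfl
          rw [hb, ht]; simp
      | top =>
          have hb : bval b (Term.func BAFunc.top ts) = ⊤ := rfl
          have ht : tval ε (Term.func BAFunc.top ts) = true := rfl
          rw [hb, ht]; simp
      | compl =>
          have hb : bval b (Term.func BAFunc.compl ts) = (bval b (ts 0))ᶜ := rfl
          have ht : tval ε (Term.func BAFunc.compl ts) = !(tval ε (ts 0)) := rfl
          rw [hb, ht]
          cases h : tval ε (ts 0) with
          | true =>
              have h0 := ih 0; rw [h, if_pos rfl] at h0
              have hle : pcell Finset.univ b ε ≤ bval b (ts 0) := inf_eq_left.mp h0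
              simp only [Bool.not_true, Bool.false_eq_true, if_false]
              exact le_bot_iff.mp (le_trans (inf_le_inf_right _ hle) (by simp))
          | false =>
              have h0 := ih 0; rw [h] at h0; simp only [Bool.false_eq_true, if_false] at h0
              simp only [Bool.not_false, if_pos rfl]
              exact inf_eq_left.mpr (disjoint_iff.mpr h0 |>.le_compl_right)
      | sup =>
          have hb : bval b (Term.func BAFunc.sup ts) = bval b (ts 0) ⊔ bval b (ts 1) := rfl
          have ht : tval ε (Term.func BAFunc.sup ts) = (tval ε (ts 0) || tval ε (ts 1)) := rfl
          rw [hb, ht, inf_sup_left, ih 0, ih 1]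
          cases tval ε (ts 0) <;> cases tval ε (ts 1) <;> simp
      | inf =>
          have hb : bval b (Term.func BAFunc.inf ts) = bval b (ts 0) ⊓ bval b (ts 1) := rfl
          have ht : tval ε (Term.func BAFunc.inf ts) = (tval ε (ts 0) && tval ε (ts 1)) := rfl
          rw [hb, ht, inf_inf_distrib_left, ih 0, ih 1]
          cases tval ε (ts 0) <;> cases tval ε (ts 1) <;> simp

lemma bval_eq_sup (b : α → B) (t : LBA.Term α) :
    bval b t = (Finset.univ : Finset (α → Bool)).sup
      (fun ε => if tval ε t then pcell Finset.univ b ε else ⊥) := by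
  classical
  conv_lhs => rw [← top_inf_eq (bval b t), ← sup_pcell (Finset.univ : Finset α) b]
  rw [Finset.sup_inf_distrib_right]
  exact Finset.sup_congr rfl fun ε _ => pcell_inf_bval b t ε

lemma bval_eq_iff (b : α → B) (t s : LBA.Term α) :
    bval b t = bval b s ↔
      ∀ ε : α → Bool, tval ε t ≠ tval ε s → pcell Finset.univ b ε = ⊥ := by
  classical
  constructor
  · intro h ε hne
    cases ht : tval ε t with
    | true =>
        have hs : tval ε s = false := by cases hs : tval ε s; rfl; exact absurd (ht.trans hs.symm) hne
        have h1 := pcell_inf_bval b t ε; rw [ht, if_pos rfl] at h1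
        have h2 := pcell_inf_bval b s ε; rw [hs] at h2
        simp only [Bool.false_eq_true, if_false] at h2
        rw [← h1, h, h2]
    | false =>
        have hs : tval ε s = true := by cases hs : tval ε s; exact absurd (ht.trans hs.symm) hne; rfl
        have h1 := pcell_inf_bval b s ε; rw [hs, if_pos rfl] at h1
        have h2 := pcell_inf_bval b t ε; rw [ht] at h2
        simp only [Bool.false_eq_true, if_false] at h2
        rw [← h1, ← h, h2]
  · intro h
    rw [bval_eq_sup b t, bval_eq_sup b s]
    refine Finset.sup_congr rfl fun ε _ => ?_
    by_cases he : tval ε t = tval ε s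
    · rw [he]
    · rw [h ε he]; simp

end Cells
section Graph
variable {V : Type*} (G : SimpleGraph V)

lemma graph_term_eq {γ : Type*} (t : Language.graph.Term γ) : ∃ i, t = Term.var i := by
  cases t with
  | var i => exact ⟨i, rfl⟩
  | func f ts => exact isEmptyElim f

lemma graph_relMap (a b : V) :
    @Structure.RelMap Language.graph V G.structure 2 adj ![a, b] = G.Adj a b := rfl

lemma graph_forward {k : ℕ} (x y : Fin k → V)
    (h : @SameQfType Language.graph V G.structure k x y) :
    (∀ i j, x i = x j ↔ y i = y j) ∧ (∀ i j, G.Adj (x i) (x j) ↔ G.Adj (y i) (y j)) := by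
  letI := G.structure
  constructor
  · intro i j
    have := h (Term.equal (Term.var i) (Term.var j)) (BoundedFormula.IsAtomic.equal _ _).isQF
    simpa [Formula.realize_equal] using this
  · intro i j
    have := h (adj.formula₂ (Term.var i) (Term.var j))
      ((BoundedFormula.IsAtomic.rel _ _).isQF)
    simpa [Formula.realize_rel₂, graph_relMap] using this

lemma graph_backward {k : ℕ} (x y : Fin k → V)
    (he : ∀ i j, x i = x j ↔ y i = y j)
    (ha : ∀ i j, G.Adj (x i) (x j) ↔ G.Adj (y i) (y j)) :
    @SameQfType Language.graph V G.structure k x y := by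
  letI := G.structure
  intro φ hqf
  induction hqf with
  | falsum => exact Iff.rfl
  | @of_isAtomic φ hat =>
      cases hat with
      | equal t₁ t₂ =>
          obtain ⟨a, rfl⟩ := graph_term_eq t₁
          obtain ⟨b, rfl⟩ := graph_term_eq t₂
          rcases a with a | a; swap; · exact a.elim0
          rcases b with b | b; swap; · exact b.elim0
          simpa [Formula.Realize, Term.realize] using he a b
      | @rel l R ts =>
          cases R
          obtain ⟨a, ha'⟩ := graph_term_eq (ts 0)
          obtain ⟨b, hb'⟩ := graph_term_eq (ts 1)
          rcases a with a | a; swap; · exact a.elim0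
          rcases b with b | b; swap; · exact b.elim0
          have hts : ts = ![Term.var (Sum.inl a), Term.var (Sum.inl b)] := by
            funext i
            fin_cases i <;> simp [ha', hb']
          subst hts
          have h0 : ∀ z : Fin k → V,
              (BoundedFormula.rel (n := 0) adj ![Term.var (Sum.inl a), Term.var (Sum.inl b)]).Realize
                z (default : Fin 0 → V) ↔ G.Adj (z a) (z b) := by
            intro z
            exact Iff.rfl
          exact (h0 x).trans ((ha a b).trans (h0 y).symm)
  | imp h1 h2 ih1 ih2 =>
      simp only [Formula.Realize, BoundedFormula.realize_imp]
      exact imp_congr ih1 ih2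
end Graph

section BA2
variable {B : Type*} [BooleanAlgebra B]

lemma pcell_reindex {α β : Type*} [Fintype α] [DecidableEq α] [Fintype β] [DecidableEq β]
    (e : β ≃ α) (b : α → B) (ε : α → Bool) :
    pcell Finset.univ (b ∘ e) (ε ∘ e) = pcell Finset.univ b ε := by
  rw [pcell, pcell, ← Finset.univ_map_equiv_to_embedding e, Finset.inf_map]
  rfl

lemma ba_sameQf {n : ℕ} (x y : Fin n → B)
    (h : ∀ ε : Fin n → Bool, pcell Finset.univ x ε = ⊥ ↔ pcell Finset.univ y ε = ⊥) :
    @SameQfType LBA B (baStructure B) n x y := by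
  letI := baStructure B
  have key : ∀ (z : Fin n → B) (ε' : (Fin n ⊕ Fin 0) → Bool),
      pcell Finset.univ (Sum.elim z (default : Fin 0 → B)) ε'
        = pcell Finset.univ z (fun i => ε' (Sum.inl i)) := by
    intro z ε'
    have := pcell_reindex (B := B) (Equiv.sumEmpty (Fin n) (Fin 0)).symm
      (Sum.elim z (default : Fin 0 → B)) ε'
    rw [← this]
    rfl
  intro φ hqf
  induction hqf with
  | falsum => exact Iff.rfl
  | @of_isAtomic φ hat =>
      cases hat with
      | equal t₁ t₂ =>
          change (bval (Sum.elim x (default : Fin 0 → B)) t₁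
                  = bval (Sum.elim x (default : Fin 0 → B)) t₂) ↔
              (bval (Sum.elim y (default : Fin 0 → B)) t₁
                  = bval (Sum.elim y (default : Fin 0 → B)) t₂)
          rw [bval_eq_iff, bval_eq_iff]
          constructor
          · intro hb ε hne
            rw [key y ε, ← h, ← key x ε]
            exact hb ε hne
          · intro hb ε hne
            rw [key x ε, h, ← key y ε]
            exact hb ε hne
      | @rel l R ts => exact Empty.elim R
  | imp h1 h2 ih1 ih2 =>
      simp only [Formula.Realize, BoundedFormula.realize_imp]
      exact imp_congr ih1 ih2

/-- formula asserting a term equals ⊥ -/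
def botFormula {γ : Type*} (t : LBA.Term γ) : LBA.Formula γ :=
  Term.equal t (Term.func BAFunc.bot Fin.elim0)

lemma botFormula_isQF {γ : Type*} (t : LBA.Term γ) : (botFormula t).IsQF :=
  (BoundedFormula.IsAtomic.equal _ _).isQF

lemma botFormula_realize {γ : Type*} (t : LBA.Term γ) (v : γ → B) :
    @Formula.Realize LBA B (baStructure B) γ (botFormula t) v ↔
      @Term.realize LBA B (baStructure B) γ v t = ⊥ := by
  letI := baStructure B
  simp [botFormula, Formula.realize_equal]
  rfl

end BA2

section Constr
variable {B : Type*} [BooleanAlgebra B] [Nontrivial B]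
variable {R : Type*} (G : SimpleGraph R) (e : ℕ ≃ R)

lemma pcell_le {n : ℕ} (f : Fin n → B) (ε : Fin n → Bool) (i : Fin n) :
    pcell Finset.univ f ε ≤ if ε i then f i else (f i)ᶜ :=
  Finset.inf_le (Finset.mem_univ i)

lemma pcell_le_of_true {n : ℕ} {f : Fin n → B} {ε : Fin n → Bool} {i : Fin n}
    (h : ε i = true) : pcell Finset.univ f ε ≤ f i := by
  have := pcell_le f ε i; rwa [h, if_pos rfl] at this

lemma pcell_le_of_false {n : ℕ} {f : Fin n → B} {ε : Fin n → Bool} {i : Fin n}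
    (h : ε i = false) : pcell Finset.univ f ε ≤ (f i)ᶜ := by
  have := pcell_le f ε i; rwa [h, if_neg (by simp)] at this

lemma pcell_disjoint {n : ℕ} (f : Fin n → B) {ε ε' : Fin n → Bool} (h : ε ≠ ε') :
    pcell Finset.univ f ε ⊓ pcell Finset.univ f ε' = ⊥ := by
  obtain ⟨i, hi⟩ := Function.ne_iff.mp h
  cases h1 : ε i with
  | true =>
      have h2 : ε' i = false := by cases h2 : ε' i; rfl; exact absurd (h1.trans h2.symm) hi
      exact le_bot_iff.mp <| le_trans
        (inf_le_inf (pcell_le_of_true h1) (pcell_le_of_false h2)) (by simp)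
  | false =>
      have h2 : ε' i = true := by cases h2 : ε' i; exact absurd (h1.trans h2.symm) hi; rfl
      exact le_bot_iff.mp <| le_trans
        (inf_le_inf (pcell_le_of_false h1) (pcell_le_of_true h2)) (by simp)

lemma univ_fin_succ_insert {n : ℕ} :
    (Finset.univ : Finset (Fin (n+1)))
      = insert (Fin.last n) (Finset.univ.map Fin.castSuccEmb) := by
  ext i
  simp only [Finset.mem_univ, true_iff, Finset.mem_insert, Finset.mem_map,
    Finset.mem_univ, true_and]
  rcases Fin.eq_castSucc_or_eq_last i with ⟨j, rfl⟩ | rfl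
  · exact Or.inr ⟨j, rfl⟩
  · exact Or.inl rfl

lemma pcell_snoc {n : ℕ} (f : Fin n → B) (d : B) (ε : Fin (n+1) → Bool) :
    pcell Finset.univ (Fin.snoc f d) ε
      = pcell Finset.univ f (ε ∘ Fin.castSucc) ⊓ (if ε (Fin.last n) then d else dᶜ) := by
  rw [pcell, univ_fin_succ_insert, Finset.inf_insert, Finset.inf_map, inf_comm]
  congr 1
  · refine Finset.inf_congr rfl fun i _ => ?_
    have : Fin.castLE (Nat.le_succ n) i = Fin.castSucc i := rfl
    simp [this, Fin.snoc_castSucc, Function.comp]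
  · simp [Fin.snoc_last]

/-- cliqueness of a Bool-pattern w.r.t. the enumeration -/
def Cliq {n : ℕ} (ε : Fin n → Bool) : Prop :=
  ∀ i j : Fin n, ε i = true → ε j = true → i ≠ j → G.Adj (e i) (e j)

def FamInv {n : ℕ} (f : Fin n → B) : Prop :=
  (∀ i j : Fin n, ¬G.Adj (e i) (e j) → i ≠ j → f i ⊓ f j = ⊥) ∧
  (∀ ε : Fin n → Bool, Cliq G e ε → pcell Finset.univ f ε ≠ ⊥)

lemma inv_base : FamInv G e (Fin.elim0 : Fin 0 → B) := by
  constructor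
  · intro i; exact i.elim0
  · intro ε _
    have : pcell Finset.univ (Fin.elim0 : Fin 0 → B) ε = ⊤ := by
      rw [pcell, Finset.univ_eq_empty, Finset.inf_empty]
    rw [this]; exact top_ne_bot

lemma inv_step (hatomless : ∀ a : B, ⊥ < a → ∃ b : B, ⊥ < b ∧ b < a)
    {n : ℕ} (f : Fin n → B) (hf : FamInv G e f) :
    ∃ d : B, FamInv G e (Fin.snoc f d) := by
  classical
  set Good : (Fin n → Bool) → Prop :=
    fun ε => Cliq G e ε ∧ ∀ i : Fin n, ε i = true → G.Adj (e i) (e n) with hGood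
  have hpos : ∀ ε : Fin n → Bool, Cliq G e ε → ⊥ < pcell Finset.univ f ε := by
    intro ε hc
    exact lt_of_le_of_ne bot_le (Ne.symm (hf.2 ε hc))
  set dfun : (Fin n → Bool) → B := fun ε =>
    if h : Good ε then Classical.choose (hatomless _ (hpos ε h.1)) else ⊥ with hdfun
  have hd_le : ∀ ε, dfun ε ≤ pcell Finset.univ f ε := by
    intro ε
    by_cases h : Good ε
    · rw [hdfun]; simp only [dif_pos h]
      exact (Classical.choose_spec (hatomless _ (hpos ε h.1))).2.le
    · rw [hdfun]; simp only [dif_neg h]; exact bot_le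
  have hd_good : ∀ ε, Good ε → ⊥ < dfun ε ∧ dfun ε < pcell Finset.univ f ε := by
    intro ε h
    rw [hdfun]; simp only [dif_pos h]
    exact Classical.choose_spec (hatomless _ (hpos ε h.1))
  set d : B := Finset.univ.sup dfun with hd
  -- (a)
  have ha : ∀ i : Fin n, ¬G.Adj (e i) (e n) → f i ⊓ d = ⊥ := by
    intro i hna
    rw [hd, Finset.sup_inf_distrib_left]
    rw [Finset.sup_eq_bot_iff]
    intro ε _
    by_cases h : Good ε
    · have hεi : ε i = false := by
        cases hεi : ε i
        · rfl
        · exact absurd (h.2 i hεi) hna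
      have : dfun ε ≤ (f i)ᶜ := le_trans (hd_le ε) (pcell_le_of_false hεi)
      exact le_bot_iff.mp (le_trans (inf_le_inf_left _ this) (by simp))
    · rw [hdfun]; simp only [dif_neg h]; exact inf_bot_eq _
  -- pcell ⊓ d = dfun computation
  have hinf_le : ∀ ε, Cliq G e ε → pcell Finset.univ f ε ⊓ d ≤ dfun ε := by
    intro ε hc
    rw [hd, Finset.sup_inf_distrib_left]
    refine Finset.sup_le fun ε' _ => ?_
    by_cases hee : ε' = ε
    · subst hee; exact inf_le_right
    · have : pcell Finset.univ f ε ⊓ dfun ε' ≤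
          pcell Finset.univ f ε ⊓ pcell Finset.univ f ε' :=
        inf_le_inf_left _ (hd_le ε')
      rw [pcell_disjoint f (Ne.symm hee)] at this
      exact le_trans this bot_le
  -- (b1)
  have hb1 : ∀ ε, Good ε → pcell Finset.univ f ε ⊓ d ≠ ⊥ := by
    intro ε h
    have h1 : dfun ε ≤ pcell Finset.univ f ε ⊓ d :=
      le_inf (hd_le ε) (Finset.le_sup (Finset.mem_univ ε))
    intro hbot
    rw [hbot, le_bot_iff] at h1
    exact (hd_good ε h).1.ne' h1
  -- (b2)
  have hb2 : ∀ ε, Cliq G e ε → pcell Finset.univ f ε ⊓ dᶜ ≠ ⊥ := by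
    intro ε hc hbot
    have hle : pcell Finset.univ f ε ≤ d := by
      calc pcell Finset.univ f ε = pcell Finset.univ f ε ⊓ (dᶜ ⊔ d) := by simp
        _ = (pcell Finset.univ f ε ⊓ dᶜ) ⊔ (pcell Finset.univ f ε ⊓ d) := inf_sup_left _ _ _
        _ = pcell Finset.univ f ε ⊓ d := by rw [hbot]; simp
        _ ≤ d := inf_le_right
    have h1 : pcell Finset.univ f ε ≤ dfun ε := by
      have := hinf_le ε hc
      rwa [inf_eq_left.mpr hle] at this
    have h2 : dfun ε < pcell Finset.univ f ε := by
      by_cases h : Good ε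
      · exact (hd_good ε h).2
      · rw [hdfun]; simp only [dif_neg h]; exact hpos ε hc
    exact absurd h1 (not_le_of_gt h2)
  refine ⟨d, ?_, ?_⟩
  · -- part 1
    intro i j hna hij
    rcases Fin.eq_castSucc_or_eq_last i with ⟨ii, rfl⟩ | rfl <;>
      rcases Fin.eq_castSucc_or_eq_last j with ⟨jj, rfl⟩ | rfl
    · rw [Fin.snoc_castSucc, Fin.snoc_castSucc]
      refine hf.1 ii jj (by simpa using hna) fun h => hij ?_
      rw [h]
    · rw [Fin.snoc_castSucc, Fin.snoc_last]
      exact ha ii (by simpa using hna)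
    · rw [Fin.snoc_last, Fin.snoc_castSucc, inf_comm]
      refine ha jj fun hadj => ?_
      simp only [Fin.coe_castSucc, Fin.val_last] at hna
      exact hna hadj.symm
    · exact absurd rfl hij
  · -- part 2
    intro ε hc
    rw [pcell_snoc]
    have hcc : Cliq G e (ε ∘ Fin.castSucc) := by
      intro i j hi hj hij
      have := hc (Fin.castSucc i) (Fin.castSucc j) hi hj
        (fun h => hij (Fin.castSucc_injective n h))
      simpa using this
    cases hl : ε (Fin.last n) with
    | true =>
        rw [if_pos rfl]
        refine hb1 _ ⟨hcc, ?_⟩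
        intro i hi
        have := hc (Fin.castSucc i) (Fin.last n) hi hl (Fin.castSucc_lt_last i).ne
        simpa using this
    | false =>
        rw [if_neg (by simp)]
        exact hb2 _ hcc

variable (hatomless : ∀ a : B, ⊥ < a → ∃ b : B, ⊥ < b ∧ b < a)

noncomputable def fam : (n : ℕ) → {f : Fin n → B // FamInv G e f}
  | 0 => ⟨Fin.elim0, inv_base G e⟩
  | n+1 =>
      ⟨Fin.snoc (fam n).1 (Classical.choose (inv_step G e hatomless (fam n).1 (fam n).2)),
        Classical.choose_spec (inv_step G e hatomless (fam n).1 (fam n).2)⟩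

noncomputable def bseq (n : ℕ) : B := (fam G e hatomless (n+1)).1 (Fin.last n)

lemma fam_bridge : ∀ (n : ℕ) (i : Fin n), (fam G e hatomless n).1 i = bseq G e hatomless i := by
  intro n
  induction n with
  | zero => exact fun i => i.elim0
  | succ n ih =>
      intro i
      rcases Fin.eq_castSucc_or_eq_last i with ⟨ii, rfl⟩ | rfl
      · have h1 : (fam G e hatomless (n+1)).1 (Fin.castSucc ii)
            = (fam G e hatomless n).1 ii := by
          simp only [fam, Fin.snoc_castSucc]
        rw [h1, ih ii]
        congr 1
      · rw [Fin.val_last]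
        rfl

noncomputable def bfun (v : R) : B := bseq G e hatomless (e.symm v)

lemma bP1 {v w : R} (hvw : v ≠ w) (hna : ¬G.Adj v w) :
    bfun G e hatomless v ⊓ bfun G e hatomless w = ⊥ := by
  set n := max (e.symm v) (e.symm w) + 1 with hn
  have hm : e.symm v < n := by omega
  have hk : e.symm w < n := by omega
  set i : Fin n := ⟨e.symm v, hm⟩
  set j : Fin n := ⟨e.symm w, hk⟩
  have hij : i ≠ j := by
    intro h
    apply hvw
    have : e.symm v = e.symm w := congrArg Fin.val h
    exact e.symm.injective this
  have := (fam G e hatomless n).2.1 i j ?_ hij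
  · rw [fam_bridge, fam_bridge] at this
    exact this
  · intro hadj
    apply hna
    have hi : e (i : ℕ) = v := e.apply_symm_apply v
    have hj : e (j : ℕ) = w := e.apply_symm_apply w
    rwa [hi, hj] at hadj

lemma bP2 (U W : Finset R) (hUW : Disjoint U W)
    (hcl : ∀ v ∈ U, ∀ w ∈ U, v ≠ w → G.Adj v w) :
    U.inf (bfun G e hatomless) ⊓ W.inf (fun w => (bfun G e hatomless w)ᶜ) ≠ ⊥ := by
  classical
  set n := ((U ∪ W).sup fun v => e.symm v) + 1 with hn
  have hb : ∀ v ∈ U ∪ W, e.symm v < n :=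
    fun v hv => Nat.lt_succ_of_le (Finset.le_sup hv)
  set ε : Fin n → Bool := fun i => decide (e (i : ℕ) ∈ U) with hε
  have hcliq : Cliq G e ε := by
    intro i j hi hj hij
    refine hcl _ (of_decide_eq_true hi) _ (of_decide_eq_true hj) fun hh => hij ?_
    exact Fin.val_injective (e.injective hh)
  have hne := (fam G e hatomless n).2.2 ε hcliq
  intro hbot
  refine hne (le_bot_iff.mp (le_trans ?_ hbot.le))
  have hfb : ∀ v : R, (hv : e.symm v < n) →
      (fam G e hatomless n).1 ⟨e.symm v, hv⟩ = bfun G e hatomless v := by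
    intro v hv
    rw [fam_bridge]
    rfl
  refine le_inf (Finset.le_inf fun v hv => ?_) (Finset.le_inf fun w hw => ?_)
  · have hvn := hb v (Finset.mem_union_left W hv)
    have hεi : ε ⟨e.symm v, hvn⟩ = true := by
      rw [hε]
      refine decide_eq_true ?_
      simpa [e.apply_symm_apply] using hv
    rw [← hfb v hvn]
    exact pcell_le_of_true hεi
  · have hwn := hb w (Finset.mem_union_right U hw)
    have hεi : ε ⟨e.symm w, hwn⟩ = false := by
      rw [hε]
      refine decide_eq_false ?_
      rw [e.apply_symm_apply]
      exact fun hwU => (Finset.disjoint_left.mp hUW hwU) hw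
    rw [← hfb w hwn]
    exact pcell_le_of_false hεi

lemma bfun_injective : Function.Injective (bfun G e hatomless) := by
  intro v w hvw
  by_contra hne
  have := bP2 G e hatomless {v} {w} (Finset.disjoint_singleton.mpr hne)
    (by intro a ha b hb hab; simp at ha hb; rw [ha, hb] at hab; exact absurd rfl hab)
  simp only [Finset.inf_singleton] at this
  rw [hvw] at this
  exact this (by simp)

/-- adjacency-like relation on the Boolean algebra -/
def ARel {B' : Type*} [BooleanAlgebra B'] (p q : B') : Prop :=
  p ≠ q ∧ p ⊓ q ≠ ⊥ ∧ p ⊓ qᶜ ≠ ⊥ ∧ pᶜ ⊓ q ≠ ⊥ ∧ pᶜ ⊓ qᶜ ≠ ⊥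

lemma ARel_symm {B' : Type*} [BooleanAlgebra B'] {p q : B'} (h : ARel p q) : ARel q p := by
  obtain ⟨h1, h2, h3, h4, h5⟩ := h
  exact ⟨h1.symm, by rwa [inf_comm], by rwa [inf_comm], by rwa [inf_comm], by rwa [inf_comm]⟩

lemma pair_clique [DecidableEq R] {v w : R} (hadj : G.Adj v w) :
    ∀ a ∈ ({v, w} : Finset R), ∀ b ∈ ({v, w} : Finset R), a ≠ b → G.Adj a b := by
  intro a ha b hb hab
  simp only [Finset.mem_insert, Finset.mem_singleton] at ha hb
  rcases ha with rfl | rfl <;> rcases hb with rfl | rfl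
  · exact absurd rfl hab
  · exact hadj
  · exact hadj.symm
  · exact absurd rfl hab

lemma pair_inf {γ : Type*} [DecidableEq R] (g : R → γ) [SemilatticeInf γ] [OrderTop γ]
    {v w : R} (hvw : v ≠ w) : ({v, w} : Finset R).inf g = g v ⊓ g w := by
  rw [Finset.inf_insert, Finset.inf_singleton]

lemma ARel_bfun_iff (v w : R) :
    ARel (bfun G e hatomless v) (bfun G e hatomless w) ↔ G.Adj v w := by
  classical
  constructor
  · rintro ⟨h1, h2, _⟩
    by_contra hna
    rcases eq_or_ne v w with rfl | hne
    · exact h1 rfl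
    · exact h2 (bP1 G e hatomless hne hna)
  · intro hadj
    have hvw : v ≠ w := hadj.ne
    refine ⟨(bfun_injective G e hatomless).ne hvw, ?_, ?_, ?_, ?_⟩
    · have := bP2 G e hatomless {v, w} ∅ (Finset.disjoint_empty_right _) (pair_clique G hadj)
      rwa [pair_inf _ hvw, Finset.inf_empty, inf_top_eq] at this
    · have := bP2 G e hatomless {v} {w} (Finset.disjoint_singleton.mpr hvw)
        (by intro a ha b hb hab; simp at ha hb; rw [ha, hb] at hab; exact absurd rfl hab)
      simpa using this
    · have := bP2 G e hatomless {w} {v} (Finset.disjoint_singleton.mpr hvw.symm)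
        (by intro a ha b hb hab; simp at ha hb; rw [ha, hb] at hab; exact absurd rfl hab)
      simp only [Finset.inf_singleton] at this
      rwa [inf_comm] at this
    · have := bP2 G e hatomless ∅ {v, w} (Finset.disjoint_empty_left _) (by intro a ha; simp at ha)
      rwa [Finset.inf_empty, top_inf_eq, pair_inf _ hvw] at this

/-- bad patterns: those that force the corresponding cell to vanish -/
def BadPat {k : ℕ} (x : Fin k → R) (ε : Fin k → Bool) : Prop :=
  ∃ i j : Fin k, ε i = true ∧
    ((ε j = false ∧ x i = x j) ∨ (ε j = true ∧ x i ≠ x j ∧ ¬G.Adj (x i) (x j)))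

lemma pcell_bfun_eq_bot_iff {k : ℕ} (x : Fin k → R) (ε : Fin k → Bool) :
    pcell Finset.univ (bfun G e hatomless ∘ x) ε = ⊥ ↔ BadPat G x ε := by
  classical
  constructor
  · intro hbot
    by_contra hnb
    set U : Finset R := (Finset.univ.filter fun i => ε i = true).image x with hU
    set W : Finset R := (Finset.univ.filter fun i => ε i = false).image x with hW
    have hUW : Disjoint U W := by
      rw [Finset.disjoint_left]
      rintro a haU haW
      simp only [hU, hW, Finset.mem_image, Finset.mem_filter, Finset.mem_univ, true_and] at haU haW
      obtain ⟨i, hi, rfl⟩ := haU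
      obtain ⟨j, hj, hji⟩ := haW
      exact hnb ⟨i, j, hi, Or.inl ⟨hj, hji.symm⟩⟩
    have hcl : ∀ a ∈ U, ∀ b ∈ U, a ≠ b → G.Adj a b := by
      intro a ha b hb hab
      simp only [hU, Finset.mem_image, Finset.mem_filter, Finset.mem_univ, true_and] at ha hb
      obtain ⟨i, hi, rfl⟩ := ha
      obtain ⟨j, hj, rfl⟩ := hb
      by_contra hna
      exact hnb ⟨i, j, hi, Or.inr ⟨hj, hab, hna⟩⟩
    refine bP2 G e hatomless U W hUW hcl (le_bot_iff.mp (le_trans ?_ hbot.le))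
    refine Finset.le_inf fun i _ => ?_
    cases hεi : ε i with
    | true =>
        rw [if_pos rfl]
        have hxU : x i ∈ U := by
          simp only [hU, Finset.mem_image, Finset.mem_filter, Finset.mem_univ, true_and]
          exact ⟨i, hεi, rfl⟩
        exact le_trans inf_le_left (Finset.inf_le hxU)
    | false =>
        rw [if_neg (by simp)]
        have hxW : x i ∈ W := by
          simp only [hW, Finset.mem_image, Finset.mem_filter, Finset.mem_univ, true_and]
          exact ⟨i, hεi, rfl⟩
        exact le_trans inf_le_right (Finset.inf_le hxW)
  · rintro ⟨i, j, hi, hcase⟩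
    rcases hcase with ⟨hj, hxe⟩ | ⟨hj, hne, hna⟩
    · refine le_bot_iff.mp (le_trans (le_inf (pcell_le_of_true hi) (pcell_le_of_false hj)) ?_)
      show bfun G e hatomless (x i) ⊓ (bfun G e hatomless (x j))ᶜ ≤ ⊥
      rw [hxe]
      simp
    · refine le_bot_iff.mp (le_trans (le_inf (pcell_le_of_true hi) (pcell_le_of_true hj)) ?_)
      show bfun G e hatomless (x i) ⊓ bfun G e hatomless (x j) ≤ ⊥
      rw [bP1 G e hatomless hne hna]

end Constr

section Emb
variable {R : Type*} (G : SimpleGraph R)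
variable (hext : ∀ U W : Finset R, Disjoint U W → ∃ v : R, v ∉ U ∧ v ∉ W ∧
      (∀ u ∈ U, G.Adj v u) ∧ ∀ w ∈ W, ¬G.Adj v w)
variable {B : Type*} [BooleanAlgebra B] (u : ℕ ≃ B)

def EmbInv {n : ℕ} (φ : Fin n → R) : Prop :=
  Function.Injective φ ∧ ∀ i j : Fin n, G.Adj (φ i) (φ j) ↔ ARel (u i) (u j)

lemma emb_base : EmbInv G u (Fin.elim0 : Fin 0 → R) :=
  ⟨fun a => a.elim0, fun i => i.elim0⟩

include hext in
lemma emb_step {n : ℕ} (φ : Fin n → R) (hφ : EmbInv G u φ) :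
    ∃ v : R, EmbInv G u (Fin.snoc φ v) := by
  classical
  set U : Finset R := (Finset.univ.filter fun i : Fin n => ARel (u i) (u n)).image φ with hU
  set W : Finset R := (Finset.univ.filter fun i : Fin n => ¬ARel (u i) (u n)).image φ with hW
  have hUW : Disjoint U W := by
    rw [Finset.disjoint_left]
    rintro a haU haW
    simp only [hU, hW, Finset.mem_image, Finset.mem_filter, Finset.mem_univ, true_and]
      at haU haW
    obtain ⟨i, hi, rfl⟩ := haU
    obtain ⟨j, hj, hji⟩ := haW
    rw [hφ.1 hji] at hj
    exact hj hi
  obtain ⟨v, hvU, hvW, hadjU, hadjW⟩ := hext U W hUW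
  have hvne : ∀ i : Fin n, φ i ≠ v := by
    intro i hiv
    by_cases hA : ARel (u (i : ℕ)) (u n)
    · exact hvU (hiv ▸ Finset.mem_image.mpr
        ⟨i, Finset.mem_filter.mpr ⟨Finset.mem_univ i, hA⟩, rfl⟩)
    · exact hvW (hiv ▸ Finset.mem_image.mpr
        ⟨i, Finset.mem_filter.mpr ⟨Finset.mem_univ i, hA⟩, rfl⟩)
  have hmemU : ∀ i : Fin n, ARel (u (i : ℕ)) (u n) → φ i ∈ U := by
    intro i hA
    exact Finset.mem_image.mpr ⟨i, Finset.mem_filter.mpr ⟨Finset.mem_univ i, hA⟩, rfl⟩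
  have hmemW : ∀ i : Fin n, ¬ARel (u (i : ℕ)) (u n) → φ i ∈ W := by
    intro i hA
    exact Finset.mem_image.mpr ⟨i, Finset.mem_filter.mpr ⟨Finset.mem_univ i, hA⟩, rfl⟩
  have hkey : ∀ i : Fin n, G.Adj (φ i) v ↔ ARel (u (i : ℕ)) (u n) := by
    intro i
    constructor
    · intro hadj
      by_contra hA
      exact hadjW (φ i) (hmemW i hA) hadj.symm
    · intro hA
      exact (hadjU (φ i) (hmemU i hA)).symm
  refine ⟨v, ?_, ?_⟩
  · intro a b hab
    rcases Fin.eq_castSucc_or_eq_last a with ⟨aa, rfl⟩ | rfl <;>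
      rcases Fin.eq_castSucc_or_eq_last b with ⟨bb, rfl⟩ | rfl
    · rw [Fin.snoc_castSucc, Fin.snoc_castSucc] at hab
      rw [hφ.1 hab]
    · rw [Fin.snoc_castSucc, Fin.snoc_last] at hab
      exact absurd hab (hvne aa)
    · rw [Fin.snoc_last, Fin.snoc_castSucc] at hab
      exact absurd hab.symm (hvne bb)
    · rfl
  · intro i j
    rcases Fin.eq_castSucc_or_eq_last i with ⟨ii, rfl⟩ | rfl <;>
      rcases Fin.eq_castSucc_or_eq_last j with ⟨jj, rfl⟩ | rfl
    · rw [Fin.snoc_castSucc, Fin.snoc_castSucc]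
      simpa using hφ.2 ii jj
    · rw [Fin.snoc_castSucc, Fin.snoc_last]
      simpa using hkey ii
    · rw [Fin.snoc_last, Fin.snoc_castSucc]
      rw [SimpleGraph.adj_comm]
      simp only [Fin.val_last, Fin.coe_castSucc]
      exact (hkey jj).trans ⟨fun h => ARel_symm h, fun h => ARel_symm h⟩
    · rw [Fin.snoc_last]
      simp only [Fin.val_last]
      constructor
      · intro h
        exact absurd h (G.irrefl)
      · rintro ⟨h1, -⟩
        exact absurd rfl h1
noncomputable def famR : (n : ℕ) → {φ : Fin n → R // EmbInv G u φ}
  | 0 => ⟨Fin.elim0, emb_base G u⟩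
  | n+1 =>
      ⟨Fin.snoc (famR n).1 (Classical.choose (emb_step G hext u (famR n).1 (famR n).2)),
        Classical.choose_spec (emb_step G hext u (famR n).1 (famR n).2)⟩

noncomputable def rseq (n : ℕ) : R := (famR G hext u (n+1)).1 (Fin.last n)

lemma famR_bridge : ∀ (n : ℕ) (i : Fin n), (famR G hext u n).1 i = rseq G hext u i := by
  intro n
  induction n with
  | zero => exact fun i => i.elim0
  | succ n ih =>
      intro i
      rcases Fin.eq_castSucc_or_eq_last i with ⟨ii, rfl⟩ | rfl
      · have h1 : (famR G hext u (n+1)).1 (Fin.castSucc ii)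
            = (famR G hext u n).1 ii := by
          simp only [famR, Fin.snoc_castSucc]
        rw [h1, ih ii]
        congr 1
      · rw [Fin.val_last]
        rfl

noncomputable def ffun (p : B) : R := rseq G hext u (u.symm p)

lemma ffun_injective : Function.Injective (ffun G hext u) := by
  intro p q hpq
  set n := max (u.symm p) (u.symm q) + 1 with hn
  have hm : u.symm p < n := by omega
  have hk : u.symm q < n := by omega
  have h1 : (famR G hext u n).1 ⟨u.symm p, hm⟩ = ffun G hext u p := by
    rw [famR_bridge]; rfl
  have h2 : (famR G hext u n).1 ⟨u.symm q, hk⟩ = ffun G hext u q := by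
    rw [famR_bridge]; rfl
  have := (famR G hext u n).2.1 (a₁ := ⟨u.symm p, hm⟩) (a₂ := ⟨u.symm q, hk⟩)
    (by rw [h1, h2]; exact hpq)
  have hsy : u.symm p = u.symm q := congrArg Fin.val this
  exact u.symm.injective hsy

lemma ffun_adj (p q : B) : G.Adj (ffun G hext u p) (ffun G hext u q) ↔ ARel p q := by
  set n := max (u.symm p) (u.symm q) + 1 with hn
  have hm : u.symm p < n := by omega
  have hk : u.symm q < n := by omega
  have h1 : (famR G hext u n).1 ⟨u.symm p, hm⟩ = ffun G hext u p := by
    rw [famR_bridge]; rfl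
  have h2 : (famR G hext u n).1 ⟨u.symm q, hk⟩ = ffun G hext u q := by
    rw [famR_bridge]; rfl
  have := (famR G hext u n).2.2 ⟨u.symm p, hm⟩ ⟨u.symm q, hk⟩
  rw [h1, h2] at this
  rw [this]
  have hp : u ((⟨u.symm p, hm⟩ : Fin n) : ℕ) = p := u.apply_symm_apply p
  have hq : u ((⟨u.symm q, hk⟩ : Fin n) : ℕ) = q := u.apply_symm_apply q
  rw [hp, hq]

end Emb

section Final

lemma bval_tinf {B : Type*} [BooleanAlgebra B] {γ : Type*} (v : γ → B) (t s : LBA.Term γ) :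
    @Term.realize LBA B (baStructure B) γ v (Term.func BAFunc.inf ![t, s])
      = @Term.realize LBA B (baStructure B) γ v t ⊓ @Term.realize LBA B (baStructure B) γ v s :=
  rfl

lemma bval_tcompl {B : Type*} [BooleanAlgebra B] {γ : Type*} (v : γ → B) (t : LBA.Term γ) :
    @Term.realize LBA B (baStructure B) γ v (Term.func BAFunc.compl ![t])
      = (@Term.realize LBA B (baStructure B) γ v t)ᶜ :=
  rfl

lemma infinite_R {R : Type*} (G : SimpleGraph R)
    (hext : ∀ U W : Finset R, Disjoint U W → ∃ v : R, v ∉ U ∧ v ∉ W ∧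
      (∀ u ∈ U, G.Adj v u) ∧ ∀ w ∈ W, ¬G.Adj v w) : Infinite R := by
  by_contra hfin
  rw [not_infinite_iff_finite] at hfin
  haveI := Fintype.ofFinite R
  obtain ⟨v, -, hv, -, -⟩ :=
    hext ∅ Finset.univ (Finset.disjoint_empty_left _)
  exact hv (Finset.mem_univ v)

lemma infinite_B {B : Type*} [BooleanAlgebra B] [Nontrivial B]
    (hatomless : ∀ a : B, ⊥ < a → ∃ b : B, ⊥ < b ∧ b < a) : Infinite B := by
  classical
  set seq : ℕ → {x : B // ⊥ < x} := fun n => Nat.rec ⟨⊤, bot_lt_top⟩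
    (fun _ p => ⟨Classical.choose (hatomless p.1 p.2),
      (Classical.choose_spec (hatomless p.1 p.2)).1⟩) n with hseq
  have hlt : ∀ n, (seq (n+1)).1 < (seq n).1 := by
    intro n
    exact (Classical.choose_spec (hatomless (seq n).1 (seq n).2)).2
  have hanti : StrictAnti fun n => (seq n).1 := strictAnti_nat_of_succ_lt hlt
  exact Infinite.of_injective _ hanti.injective

/-- BadPat is determined by qf data -/
lemma BadPat_congr {R : Type*} (G : SimpleGraph R) {k : ℕ} {x y : Fin k → R}
    (he : ∀ i j, x i = x j ↔ y i = y j)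
    (ha : ∀ i j, G.Adj (x i) (x j) ↔ G.Adj (y i) (y j)) (ε : Fin k → Bool) :
    BadPat G x ε ↔ BadPat G y ε := by
  constructor <;> rintro ⟨i, j, hi, hc⟩ <;> refine ⟨i, j, hi, ?_⟩
  · rcases hc with ⟨h1, h2⟩ | ⟨h1, h2, h3⟩
    · exact Or.inl ⟨h1, (he i j).mp h2⟩
    · exact Or.inr ⟨h1, fun hh => h2 ((he i j).mpr hh), fun hh => h3 ((ha i j).mpr hh)⟩
  · rcases hc with ⟨h1, h2⟩ | ⟨h1, h2, h3⟩
    · exact Or.inl ⟨h1, (he i j).mpr h2⟩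
    · exact Or.inr ⟨h1, fun hh => h2 ((he i j).mp hh), fun hh => h3 ((ha i j).mp hh)⟩

end Final

lemma ba_pair_extract {B : Type*} [BooleanAlgebra B] {k : ℕ} (p q : Fin k → B)
    (h : @SameQfType LBA B (baStructure B) k p q) :
    (∀ i j, p i = p j ↔ q i = q j) ∧ (∀ i j, ARel (p i) (p j) ↔ ARel (q i) (q j)) := by
  letI := baStructure B
  have heq : ∀ i j, p i = p j ↔ q i = q j := by
    intro i j
    have := h (Term.equal (Term.var i) (Term.var j)) (BoundedFormula.IsAtomic.equal _ _).isQF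
    simpa [Formula.realize_equal, Term.realize] using this
  have hbot : ∀ t : LBA.Term (Fin k),
      (@Term.realize LBA B (baStructure B) _ p t = ⊥ ↔
        @Term.realize LBA B (baStructure B) _ q t = ⊥) := by
    intro t
    have := h (botFormula t) (botFormula_isQF t)
    rwa [botFormula_realize, botFormula_realize] at this
  refine ⟨heq, fun i j => ?_⟩
  have h1 := hbot (Term.func BAFunc.inf ![Term.var i, Term.var j])
  have h2 := hbot (Term.func BAFunc.inf ![Term.var i, Term.func BAFunc.compl ![Term.var j] ])
  have h3 := hbot (Term.func BAFunc.inf ![Term.func BAFunc.compl ![Term.var i], Term.var j])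
  have h4 := hbot (Term.func BAFunc.inf
    ![Term.func BAFunc.compl ![Term.var i], Term.func BAFunc.compl ![Term.var j] ])
  exact and_congr (not_congr (heq i j)) (and_congr (not_congr h1)
    (and_congr (not_congr h2) (and_congr (not_congr h3) (not_congr h4))))


/-- Theorem 4.1 / `4.2`: the countable random graph is a semi-retract of the
countable atomless Boolean algebra. -/
theorem randomGraph_semiRetract_of_atomless_BA
    (B : Type*) [BooleanAlgebra B] [Countable B] [Nontrivial B]
    (hatomless : ∀ a : B, ⊥ < a → ∃ b : B, ⊥ < b ∧ b < a)
    (R : Type*) [Countable R] (G : SimpleGraph R)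
    (hext : ∀ U W : Finset R, Disjoint U W → ∃ v : R, v ∉ U ∧ v ∉ W ∧
      (∀ u ∈ U, G.Adj v u) ∧ ∀ w ∈ W, ¬G.Adj v w) :
    ∃ (g : R → B) (f : B → R),
      @IsSemiRetraction FirstOrder.Language.graph LBA R B G.structure (baStructure B) g f := by
  classical
  haveI hRinf : Infinite R := infinite_R G hext
  haveI hBinf : Infinite B := infinite_B hatomless
  obtain ⟨e⟩ : Nonempty (ℕ ≃ R) := by
    haveI : Encodable R := Encodable.ofCountable R
    haveI : Denumerable R := Denumerable.ofEncodableOfInfinite R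
    exact ⟨(Denumerable.eqv R).symm⟩
  obtain ⟨u⟩ : Nonempty (ℕ ≃ B) := by
    haveI : Encodable B := Encodable.ofCountable B
    haveI : Denumerable B := Denumerable.ofEncodableOfInfinite B
    exact ⟨(Denumerable.eqv B).symm⟩
  refine ⟨bfun G e hatomless, ffun G hext u, ⟨bfun_injective G e hatomless, ?_⟩,
    ⟨ffun_injective G hext u, ?_⟩, ?_⟩
  · -- g is qftp respecting
    intro k x y hxy
    obtain ⟨he, ha⟩ := graph_forward G x y hxy
    exact ba_sameQf _ _ fun ε => by
      rw [show (bfun G e hatomless ∘ x) = (bfun G e hatomless ∘ x) from rfl]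
      rw [pcell_bfun_eq_bot_iff, pcell_bfun_eq_bot_iff]
      exact BadPat_congr G he ha ε
  · -- f is qftp respecting
    intro k p q hpq
    obtain ⟨he, ha⟩ := ba_pair_extract p q hpq
    refine graph_backward G _ _ (fun i j => ?_) (fun i j => ?_)
    · simp only [Function.comp_apply]
      rw [(ffun_injective G hext u).eq_iff, (ffun_injective G hext u).eq_iff]
      exact he i j
    · simp only [Function.comp_apply]
      rw [ffun_adj, ffun_adj]
      exact ha i j
  · -- f ∘ g is an embedding
    intro k x
    refine graph_backward G _ _ (fun i j => ?_) (fun i j => ?_)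
    · simp only [Function.comp_apply]
      rw [(ffun_injective G hext u).eq_iff, (bfun_injective G e hatomless).eq_iff]
    · simp only [Function.comp_apply]
      rw [ffun_adj, ARel_bfun_iff]
end

section
/- Let 𝒜 be a locally finite L-structure, ℬ an L'-structure, and suppose 𝒜 is a semi-retract of ℬ via (g, f). Let A be a finite substructure of 𝒜 and let A' = ⟨g(A)⟩_ℬ be the substructure of ℬ generated by g(A). Suppose d ≥ 1 is an integer such that ℬ →ᵉ (B₀)^{A'}_{r,d} for every finitely generated substructure B₀ of ℬ and every integer r ≥ 2. Then there is an integer d₀ ≥ 1 with |Aut(A)| · d₀ ≤ d such that 𝒜 → (B)^A_{r,d₀} for every finite substructure B of 𝒜 and every integer r ≥ 2; that is, A has Ramsey degree for substructures at most d / |Aut(A)| in 𝒜. -/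
open FirstOrder FirstOrder.Language

namespace SemiRetractionProof

open Set FirstOrder.Language.Substructure FirstOrder.Language.Structure

variable {L : FirstOrder.Language} {M : Type*} [L.Structure M]

theorem SameQfType.symm {n : ℕ} {x y : Fin n → M} (h : SameQfType L M x y) :
    SameQfType L M y x := fun φ hφ => (h φ hφ).symm

theorem SameQfType.trans {n : ℕ} {x y z : Fin n → M} (h1 : SameQfType L M x y)
    (h2 : SameQfType L M y z) : SameQfType L M x z := fun φ hφ => (h1 φ hφ).trans (h2 φ hφ)

theorem realize_comp_embedding {N : Type*} [L.Structure N] (j : M ↪[L] N) {n : ℕ}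
    {x : Fin n → M} {φ : L.Formula (Fin n)} (hφ : φ.IsQF) :
    φ.Realize (⇑j ∘ x) ↔ φ.Realize x := by
  have h := hφ.realize_embedding j (v := x) (xs := (default : Fin 0 → M))
  rwa [Subsingleton.elim ((⇑j) ∘ (default : Fin 0 → M)) (default : Fin 0 → N)] at h

theorem sameQfType_comp {P : Type*} [L.Structure P] (j₁ j₂ : P ↪[L] M) {n : ℕ}
    (z : Fin n → P) : SameQfType L M (⇑j₁ ∘ z) (⇑j₂ ∘ z) := fun φ hφ => by
  rw [realize_comp_embedding j₁ hφ, realize_comp_embedding j₂ hφ]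

theorem exists_term_of_mem_closure {n : ℕ} {x : Fin n → M} {a : M}
    (ha : a ∈ closure L (Set.range x)) : ∃ t : L.Term (Fin n), t.realize x = a := by
  obtain ⟨t, ht⟩ := mem_closure_iff_exists_term.1 ha
  have ρ : ∀ s : Set.range x, ∃ i, x i = ↑s := fun s => s.2
  refine ⟨t.relabel fun s => (ρ s).choose, ?_⟩
  rw [Term.realize_relabel, ← ht]
  congr 1
  funext s
  exact (ρ s).choose_spec

theorem exists_embedding_of_sameQfType {n : ℕ} {x y : Fin n → M} (hxy : SameQfType L M x y)
    (S : L.Substructure M) (hS : S = closure L (Set.range x)) :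
    ∃ e : S ↪[L] M, ∀ (t : L.Term (Fin n)) (h : t.realize x ∈ S),
      e ⟨t.realize x, h⟩ = t.realize y := by
  subst hS
  have hterm : ∀ s : closure L (Set.range x), ∃ t : L.Term (Fin n), t.realize x = ↑s :=
    fun s => exists_term_of_mem_closure s.2
  set tm : closure L (Set.range x) → L.Term (Fin n) := fun s => (hterm s).choose with htm
  have htms : ∀ s, (tm s).realize x = ↑s := fun s => (hterm s).choose_spec
  have keyIff : ∀ t₁ t₂ : L.Term (Fin n),
      t₁.realize x = t₂.realize x ↔ t₁.realize y = t₂.realize y := by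
    intro t₁ t₂
    have h := hxy (t₁.equal t₂) ((BoundedFormula.IsAtomic.equal _ _).isQF)
    simpa [Formula.realize_equal] using h
  have relIff : ∀ (m : ℕ) (R : L.Relations m) (ts : Fin m → L.Term (Fin n)),
      RelMap R (fun i => (ts i).realize x) ↔ RelMap R (fun i => (ts i).realize y) := by
    intro m R ts
    have h := hxy (R.formula ts) ((BoundedFormula.IsAtomic.rel _ _).isQF)
    simpa [Formula.realize_rel] using h
  have hFapp : ∀ (t : L.Term (Fin n)) (h : t.realize x ∈ closure L (Set.range x)),
      (tm ⟨t.realize x, h⟩).realize y = t.realize y := by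
    intro t h
    exact (keyIff _ _).1 (htms ⟨t.realize x, h⟩)
  refine ⟨{ toFun := fun s => (tm s).realize y, inj' := ?_, map_fun' := ?_, map_rel' := ?_ },
    hFapp⟩
  · intro s₁ s₂ h
    exact Subtype.ext (by rw [← htms s₁, ← htms s₂]; exact (keyIff _ _).2 h)
  · intro m q a
    have hx : (tm (funMap q a)).realize x = (Term.func q fun i => tm (a i)).realize x := by
      rw [htms (funMap q a), Term.realize_func]
      show (funMap q fun i => ((a i : M))) = funMap q fun i => (tm (a i)).realize x
      exact congrArg _ (funext fun i => (htms (a i)).symm)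
    have hy := (keyIff _ _).1 hx
    show (tm (funMap q a)).realize y = funMap q fun i => (tm (a i)).realize y
    rw [hy, Term.realize_func]
  · intro m R a
    have h := relIff m R (fun i => tm (a i))
    have e1 : (fun i => (tm (a i)).realize x) = fun i => ((a i : M)) := funext fun i => htms (a i)
    rw [e1] at h
    exact h.symm

theorem exists_embedding_of_chain (B : L.Substructure M) (F : M → M)
    (hF : ∀ (m : ℕ) (x : Fin m → M), (∀ i, x i ∈ B) → SameQfType L M x (F ∘ x)) :
    ∃ H : ↥B ↪[L] M, ∀ b : ↥B, H b = F ↑b := by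
  refine ⟨{ toFun := fun b => F ↑b, inj' := ?_, map_fun' := ?_, map_rel' := ?_ },
    fun b => rfl⟩
  · intro b₁ b₂ hb
    have hmem : ∀ i, (![(b₁ : M), (b₂ : M)]) i ∈ B := by
      intro i
      fin_cases i
      · exact b₁.2
      · exact b₂.2
    have h := hF 2 ![(b₁ : M), (b₂ : M)] hmem
      (Term.equal (Term.var 0) (Term.var 1)) ((BoundedFormula.IsAtomic.equal _ _).isQF)
    simp only [Formula.realize_equal, Term.realize_var, Function.comp_apply] at h
    refine Subtype.ext ?_
    have := h.2 (by simpa using hb)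
    simpa using this
  · intro m q a
    set x : Fin (m + 1) → M := Fin.snoc (fun i => ↑(a i)) (funMap q fun i => ↑(a i)) with hxdef
    have hmem : ∀ i, x i ∈ B := by
      intro i
      refine Fin.lastCases ?_ ?_ i
      · rw [hxdef]; simp only [Fin.snoc_last]
        exact B.fun_mem q _ (fun i => (a i).2)
      · intro j; rw [hxdef]; simp only [Fin.snoc_castSucc]
        exact (a j).2
    have h := hF (m + 1) x hmem
      (Term.equal (Term.func q fun i => Term.var i.castSucc) (Term.var (Fin.last m)))
      ((BoundedFormula.IsAtomic.equal _ _).isQF)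
    simp only [Formula.realize_equal, Term.realize_func, Term.realize_var,
      Function.comp_apply] at h
    have h1 : funMap q (fun i => x i.castSucc) = x (Fin.last m) := by
      rw [hxdef]; simp [Fin.snoc_castSucc, Fin.snoc_last]
    have h2 := h.1 h1
    have h3 : ∀ i, x i.castSucc = ↑(a i) := fun i => by rw [hxdef]; simp
    have h4 : x (Fin.last m) = funMap q fun i => ↑(a i) := by rw [hxdef]; simp
    show F ((funMap q a : ↥B) : M) = funMap q fun i => F ↑(a i)
    have h5 : ((funMap q a : ↥B) : M) = funMap q fun i => ((a i : M)) := rfl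
    rw [h5, ← h4, ← h2]
    congr 1
    funext i
    rw [h3]
  · intro m R a
    have h := hF m (fun i => ↑(a i)) (fun i => (a i).2)
      (R.formula fun i => Term.var i) ((BoundedFormula.IsAtomic.rel _ _).isQF)
    simp only [Formula.realize_rel, Term.realize_var, Function.comp_apply] at h
    exact h.symm

theorem range_closed_of_sameQfType {n : ℕ} {abar bbar : Fin n → M} (A : L.Substructure M)
    (hA : Set.range abar = ↑A) (h : SameQfType L M abar bbar) :
    Set.range bbar = ↑(closure L (Set.range bbar)) := by
  have closed : ∀ (m : ℕ) (q : L.Functions m), FirstOrder.Language.ClosedUnder q (Set.range bbar) := by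
    intro m q z hz
    choose l hl using hz
    have hb : z = bbar ∘ l := funext fun i => (hl i).symm
    have ha : funMap q (abar ∘ l) ∈ Set.range abar := by
      rw [hA]
      exact A.fun_mem q _ (fun i => by
        have : abar (l i) ∈ Set.range abar := Set.mem_range_self _
        rwa [hA] at this)
    obtain ⟨i₀, hi₀⟩ := ha
    have hform := h (Term.equal (Term.func q fun i => Term.var (l i)) (Term.var i₀))
      ((BoundedFormula.IsAtomic.equal _ _).isQF)
    simp only [Formula.realize_equal, Term.realize_func, Term.realize_var] at hform
    have : funMap q (fun i => bbar (l i)) = bbar i₀ := hform.1 hi₀.symm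
    rw [hb]
    exact ⟨i₀, this.symm⟩
  let S' : L.Substructure M := ⟨Set.range bbar, fun {m} q => closed m q⟩
  have hcl : closure L (Set.range bbar) = S' :=
    closure_eq_of_le (fun z hz => hz) (fun z hz => subset_closure hz)
  rw [hcl]
  rfl

theorem injective_of_sameQfType {n : ℕ} {abar bbar : Fin n → M}
    (h : SameQfType L M abar bbar) (ha : Function.Injective abar) :
    Function.Injective bbar := by
  intro i j hij
  have hform := h (Term.equal (Term.var i) (Term.var j))
    ((BoundedFormula.IsAtomic.equal _ _).isQF)
  simp only [Formula.realize_equal, Term.realize_var] at hform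
  exact ha (hform.2 hij)

end SemiRetractionProof


open Set FirstOrder.Language.Substructure FirstOrder.Language.Structure SemiRetractionProof

/-- Corollary 5.2 / `degrees_bound`: if `𝒜` is a locally finite semi-retract of
`ℬ` via `(g, f)` and `A' = ⟨g(A)⟩_ℬ` has Ramsey degree for embeddings at most `d` in `ℬ`, then
`A` has Ramsey degree for substructures at most `d / |Aut(A)|` in `𝒜`: there is `d₀ ≥ 1` with
`|Aut(A)| · d₀ ≤ d` such that `𝒜 → (B)^A_{r,d₀}` for all finite `B ⊆ 𝒜` and all `r ≥ 2`. -/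
theorem semiRetraction_transfers_substructure_degree_bound
    {L L' : FirstOrder.Language} {M N : Type*} [L.Structure M] [L'.Structure N]
    (g : M → N) (f : N → M)
    (hlf : StructLocallyFinite L M)
    (hsr : IsSemiRetraction L L' M N g f)
    (A : L.Substructure M) (hAfin : (A : Set M).Finite)
    (d : ℕ) (hd : 1 ≤ d)
    (hdeg : ∀ B₀ : L'.Substructure N, B₀.FG → ∀ r : ℕ, 2 ≤ r →
      ArrowEmb L' N (Substructure.closure L' (g '' (A : Set M))) B₀ r d) :
    ∃ d₀ : ℕ, 1 ≤ d₀ ∧ Nat.card (A ≃[L] A) * d₀ ≤ d ∧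
      ∀ B : L.Substructure M, (B : Set M).Finite → ∀ r : ℕ, 2 ≤ r →
        ArrowSub L M A B r d₀ := by
  classical
  obtain ⟨⟨gInj, gResp⟩, ⟨fInj, fResp⟩, hfg⟩ := hsr
  haveI hAfinT : Finite ↥A := hAfin.to_subtype
  haveI : Nonempty (↥A ≃[L] ↥A) := ⟨FirstOrder.Language.Equiv.refl L ↥A⟩
  haveI : Finite (↥A ≃[L] ↥A) :=
    Finite.of_injective (fun σ => (σ : ↥A → ↥A))
      (fun σ τ h => by ext a; exact congrArg Subtype.val (congrFun h a))
  set k := Nat.card (↥A ≃[L] ↥A) with hk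
  have hkpos : 0 < k := Nat.card_pos
  -- enumeration of A
  set n := hAfin.toFinset.card with hn
  set abar : Fin n → M := fun i => ↑(hAfin.toFinset.equivFin.symm i) with habar
  have habar_inj : Function.Injective abar := fun i j hij =>
    hAfin.toFinset.equivFin.symm.injective (Subtype.coe_injective hij)
  have habar_range : Set.range abar = (A : Set M) := by
    have h1 : Set.range abar = Subtype.val '' Set.range (hAfin.toFinset.equivFin.symm) := by
      rw [← Set.range_comp]; rfl
    rw [h1, Equiv.range_eq_univ, Set.image_univ, Subtype.range_coe_subtype]
    ext z
    simp [Set.Finite.mem_toFinset]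
  have habar_mem : ∀ i, abar i ∈ A := fun i => by
    have h1 : abar i ∈ Set.range abar := Set.mem_range_self _
    rwa [habar_range] at h1
  set A' := Substructure.closure L' (g '' (A : Set M)) with hA'
  have hgamem : ∀ i, g (abar i) ∈ A' := fun i =>
    subset_closure ⟨abar i, habar_mem i, rfl⟩
  -- the tuple induced by an embedding of A' into N
  set bj : (↥A' ↪[L'] N) → (Fin n → M) := fun j i => f (j ⟨g (abar i), hgamem i⟩) with hbj
  have hbj_type : ∀ j : ↥A' ↪[L'] N, SameQfType L M abar (bj j) := by
    intro j
    have h1 : SameQfType L M abar (f ∘ g ∘ abar) := hfg n abar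
    have h2 : SameQfType L' N
        (⇑A'.subtype ∘ fun i => (⟨g (abar i), hgamem i⟩ : ↥A'))
        (⇑j ∘ fun i => (⟨g (abar i), hgamem i⟩ : ↥A')) := sameQfType_comp _ _ _
    have h3 := fResp n _ _ h2
    exact SameQfType.trans h1 h3
  -- canonical enumerations and indexings
  set chos : L.Substructure M → (Fin n → M) := fun S =>
    if h : ∃ b : Fin n → M, SameQfType L M abar b ∧ Substructure.closure L (Set.range b) = S
    then h.choose else abar with hchos
  have hchos_spec : ∀ S : L.Substructure M,
      (∃ b : Fin n → M, SameQfType L M abar b ∧ Substructure.closure L (Set.range b) = S) →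
      SameQfType L M abar (chos S) ∧ Substructure.closure L (Set.range (chos S)) = S := by
    intro S h
    rw [hchos]
    simp only [dif_pos h]
    exact h.choose_spec
  set idx : (Fin n → M) → (Fin n → Fin n) := fun b i =>
    if h : ∃ j', chos (Substructure.closure L (Set.range b)) j' = b i then h.choose else i
    with hidx
  have hrange_closed : ∀ b : Fin n → M, SameQfType L M abar b →
      Set.range b = ↑(Substructure.closure L (Set.range b)) := fun b hb =>
    range_closed_of_sameQfType A habar_range hb
  have hidx_spec : ∀ b : Fin n → M, SameQfType L M abar b →
      ∀ i, chos (Substructure.closure L (Set.range b)) (idx b i) = b i := by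
    intro b hb i
    have hS := hchos_spec (Substructure.closure L (Set.range b)) ⟨b, hb, rfl⟩
    have h1 : Set.range (chos (Substructure.closure L (Set.range b)))
        = ↑(Substructure.closure L (Set.range b)) := by
      have h2 := hrange_closed _ hS.1
      rw [hS.2] at h2
      exact h2
    have h3 : b i ∈ Set.range (chos (Substructure.closure L (Set.range b))) := by
      rw [h1, ← hrange_closed b hb]
      exact Set.mem_range_self _
    have h4 : ∃ j', chos (Substructure.closure L (Set.range b)) j' = b i := h3
    rw [hidx]
    simp only [dif_pos h4]
    exact h4.choose_spec
  -- MAIN LEMMA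
  have main : ∀ B : L.Substructure M, (B : Set M).Finite →
      ∀ (r : ℕ) (c : L.Substructure M → Fin r),
      ∃ B' : L.Substructure M, Nonempty (B' ≃[L] B) ∧
        k * (c '' {A₂ : L.Substructure M | A₂ ≤ B' ∧ Nonempty (A₂ ≃[L] A)}).ncard ≤ d := by
    intro B hBfin r c
    set B₀ := Substructure.closure L' (g '' (B : Set M)) with hB₀
    have hB₀fg : B₀.FG := Substructure.fg_closure (hBfin.image g)
    set r' := r * n ^ n + 2 with hr'
    have hcard : Fintype.card (Fin r × (Fin n → Fin n)) ≤ r' := by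
      simp only [Fintype.card_prod, Fintype.card_fun, Fintype.card_fin, hr']
      omega
    set enc : Fin r × (Fin n → Fin n) → Fin r' := fun p =>
      Fin.castLE hcard (Fintype.equivFin _ p) with henc
    have enc_inj : Function.Injective enc := fun p q hpq => by
      have := Fin.castLE_injective hcard hpq
      exact (Fintype.equivFin _).injective this
    set c' : (↥A' ↪[L'] N) → Fin r' := fun j =>
      enc (c (Substructure.closure L (Set.range (bj j))), idx (bj j)) with hc'
    obtain ⟨h, hWbound⟩ := hdeg B₀ hB₀fg r' (by omega) c'
    -- the map F and the embedding H of B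
    have hgB : ∀ b, b ∈ B → g b ∈ B₀ := fun b hb => subset_closure ⟨b, hb, rfl⟩
    set F : M → M := fun m => if hm : g m ∈ B₀ then f (h ⟨g m, hm⟩) else m with hFdef
    have hFeq : ∀ b (hb : b ∈ B), F b = f (h ⟨g b, hgB b hb⟩) := fun b hb => dif_pos _
    have hFchain : ∀ (m : ℕ) (x : Fin m → M), (∀ i, x i ∈ B) → SameQfType L M x (F ∘ x) := by
      intro m x hx
      have h2 : SameQfType L' N
          (⇑B₀.subtype ∘ fun i => (⟨g (x i), hgB _ (hx i)⟩ : ↥B₀))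
          (⇑h ∘ fun i => (⟨g (x i), hgB _ (hx i)⟩ : ↥B₀)) := sameQfType_comp _ _ _
      have h3 := fResp m _ _ h2
      have h4 : (f ∘ ⇑h ∘ fun i => (⟨g (x i), hgB _ (hx i)⟩ : ↥B₀)) = F ∘ x := by
        funext i
        show f (h ⟨g (x i), hgB _ (hx i)⟩) = F (x i)
        rw [hFeq _ (hx i)]
      rw [h4] at h3
      exact SameQfType.trans (hfg m x) h3
    obtain ⟨H, hH⟩ := exists_embedding_of_chain B F hFchain
    refine ⟨H.toHom.range, ⟨H.equivRange.symm⟩, ?_⟩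
    -- realization claim
    have claim : ∀ b : Fin n → M, SameQfType L M abar b →
        (∀ i, b i ∈ H.toHom.range) →
        ∃ e : ↥A' ↪[L'] ↥B₀, bj (h.comp e) = b := by
      intro b hb hbr
      choose u hu using fun i => Hom.mem_range.1 (hbr i)
      set xb : Fin n → M := fun i => ↑(u i) with hxb
      have hxbB : ∀ i, xb i ∈ B := fun i => (u i).2
      have hFx : F ∘ xb = b := by
        funext i
        show F ↑(u i) = b i
        rw [← hH (u i)]
        exact hu i
      have hxb_type : SameQfType L M abar xb := by
        have h1 := hFchain n xb hxbB
        rw [hFx] at h1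
        exact SameQfType.trans hb (SameQfType.symm h1)
      have hgty : SameQfType L' N (g ∘ abar) (g ∘ xb) := gResp n abar xb hxb_type
      have hA'eq : A' = Substructure.closure L' (Set.range (g ∘ abar)) := by
        rw [hA', Set.range_comp, habar_range]
      obtain ⟨e₀, he₀⟩ := exists_embedding_of_sameQfType hgty A' hA'eq
      have hrange : ∀ s : ↥A', (e₀ s : N) ∈ B₀ := by
        intro s
        have hs : (s : N) ∈ Substructure.closure L' (Set.range (g ∘ abar)) := by
          rw [← hA'eq]; exact s.2
        obtain ⟨t, ht⟩ := exists_term_of_mem_closure hs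
        have hseq : s = ⟨t.realize (g ∘ abar), by rw [ht]; exact s.2⟩ :=
          Subtype.ext ht.symm
        rw [hseq, he₀]
        exact t.realize_mem (g ∘ xb) (fun i => hgB _ (hxbB i))
      refine ⟨e₀.codRestrict B₀ hrange, ?_⟩
      funext i
      show f ((h.comp (e₀.codRestrict B₀ hrange)) ⟨g (abar i), hgamem i⟩) = b i
      rw [Embedding.comp_apply, Embedding.codRestrict_apply']
      have he1 : e₀ ⟨g (abar i), hgamem i⟩ = g (xb i) := he₀ (Term.var i) (hgamem i)
      have he2 : (⟨(e₀ ⟨g (abar i), hgamem i⟩ : N), hrange _⟩ : ↥B₀)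
          = ⟨g (xb i), hgB _ (hxbB i)⟩ := Subtype.ext he1
      rw [he2, ← hFeq _ (hxbB i)]
      exact congrFun hFx i
    -- copies and their enumerations
    set Cop := {A₂ : L.Substructure M | A₂ ≤ H.toHom.range ∧ Nonempty (A₂ ≃[L] A)} with hCop
    set V := c '' Cop with hV
    have hVsub : ∀ v : ↥V, ∃ A₂, A₂ ∈ Cop ∧ c A₂ = ↑v := fun v => v.2
    choose Av hAvCop hAvc using hVsub
    have hiso : ∀ v : ↥V, ↥(Av v) ≃[L] ↥A := fun v => Classical.choice (hAvCop v).2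
    set bb : ↥V → (↥A ≃[L] ↥A) → (Fin n → M) := fun v σ i =>
      ↑((hiso v).symm (σ ⟨abar i, habar_mem i⟩)) with hbb
    have hbb_type : ∀ v σ, SameQfType L M abar (bb v σ) := by
      intro v σ
      exact sameQfType_comp A.subtype
        ((Av v).subtype.comp ((hiso v).symm.toEmbedding.comp σ.toEmbedding))
        (fun i => (⟨abar i, habar_mem i⟩ : ↥A))
    have hbb_range : ∀ v σ, Set.range (bb v σ) = ↑(Av v) := by
      intro v σ
      ext m
      constructor
      · rintro ⟨i, rfl⟩
        exact ((hiso v).symm _).2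
      · intro hm
        obtain ⟨i, hi⟩ : ∃ i, abar i = ↑(σ.symm ((hiso v) ⟨m, hm⟩)) := by
          have h1 : (↑(σ.symm ((hiso v) ⟨m, hm⟩)) : M) ∈ Set.range abar := by
            rw [habar_range]; exact (σ.symm _).2
          exact h1
        refine ⟨i, ?_⟩
        show (↑((hiso v).symm (σ ⟨abar i, habar_mem i⟩)) : M) = m
        have h2 : (⟨abar i, habar_mem i⟩ : ↥A) = σ.symm ((hiso v) ⟨m, hm⟩) :=
          Subtype.ext hi
        rw [h2]
        simp
    have hbb_closure : ∀ v σ, Substructure.closure L (Set.range (bb v σ)) = Av v := by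
      intro v σ
      rw [hbb_range]
      exact closure_eq _
    have hbb_inj : ∀ v : ↥V, Function.Injective (fun σ : ↥A ≃[L] ↥A => idx (bb v σ)) := by
      intro v σ σ' hsig
      have hbbeq : bb v σ = bb v σ' := by
        funext i
        have h1 := hidx_spec (bb v σ) (hbb_type v σ) i
        have h2 := hidx_spec (bb v σ') (hbb_type v σ') i
        rw [hbb_closure v σ] at h1
        rw [hbb_closure v σ'] at h2
        have hsig' : idx (bb v σ) = idx (bb v σ') := hsig
        rw [← h1, ← h2, hsig']
      ext a
      obtain ⟨i, hi⟩ : ∃ i, abar i = ↑a := by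
        have h1 : (a : M) ∈ Set.range abar := by rw [habar_range]; exact a.2
        exact h1
      have h3 := congrFun hbbeq i
      have h4 : σ ⟨abar i, habar_mem i⟩ = σ' ⟨abar i, habar_mem i⟩ :=
        (hiso v).symm.injective (Subtype.ext h3)
      have h5 : (⟨abar i, habar_mem i⟩ : ↥A) = a := Subtype.ext hi
      rw [← h5]
      exact congrArg Subtype.val h4
    -- the injection and the counting
    set okS := {j : ↥A' ↪[L'] N | ∃ e : ↥A' ↪[L'] ↥B₀, j = h.comp e} with hokS
    set W := c' '' okS with hW
    haveI : Finite ↥W := (W.toFinite).to_subtype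
    have hmemW : ∀ (v : ↥V) (σ : ↥A ≃[L] ↥A),
        enc (↑v, idx (bb v σ)) ∈ W := by
      intro v σ
      obtain ⟨e, he⟩ := claim (bb v σ) (hbb_type v σ) (fun i => by
        have h1 : bb v σ i ∈ Set.range (bb v σ) := Set.mem_range_self _
        rw [hbb_range] at h1
        exact (hAvCop v).1 h1)
      refine ⟨h.comp e, ⟨e, rfl⟩, ?_⟩
      rw [hc']
      simp only
      rw [he, hbb_closure v σ, hAvc v]
    set ξ : ↥V × (↥A ≃[L] ↥A) → ↥W := fun p =>
      ⟨enc (↑p.1, idx (bb p.1 p.2)), hmemW p.1 p.2⟩ with hξ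
    have hξinj : Function.Injective ξ := by
      intro p q hpq
      have h1 : enc (↑p.1, idx (bb p.1 p.2)) = enc (↑q.1, idx (bb q.1 q.2)) :=
        congrArg Subtype.val hpq
      have h2 := enc_inj h1
      have h3 : (p.1 : Fin r) = ↑q.1 := congrArg Prod.fst h2
      have h4 : p.1 = q.1 := Subtype.ext h3
      have h5 : idx (bb p.1 p.2) = idx (bb q.1 q.2) := congrArg Prod.snd h2
      rw [← h4] at h5
      have h6 : p.2 = q.2 := hbb_inj p.1 h5
      exact Prod.ext h4 h6
    have hcount : Nat.card (↥V × (↥A ≃[L] ↥A)) ≤ Nat.card ↥W :=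
      Nat.card_le_card_of_injective ξ hξinj
    rw [Nat.card_prod, Nat.card_coe_set_eq] at hcount
    rw [Nat.card_coe_set_eq] at hcount
    calc k * (c '' Cop).ncard = (c '' Cop).ncard * k := mul_comm _ _
      _ ≤ W.ncard := hcount
      _ ≤ d := hWbound
  -- conclusion
  have hkd : k ≤ d := by
    obtain ⟨B', hB'iso, hbound⟩ := main A hAfin 1 (fun _ => 0)
    have hne : ((fun _ : L.Substructure M => (0 : Fin 1)) ''
        {A₂ : L.Substructure M | A₂ ≤ B' ∧ Nonempty (A₂ ≃[L] A)}).Nonempty :=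
      ⟨0, B', ⟨le_refl _, hB'iso⟩, rfl⟩
    have h1 : 1 ≤ ((fun _ : L.Substructure M => (0 : Fin 1)) ''
        {A₂ : L.Substructure M | A₂ ≤ B' ∧ Nonempty (A₂ ≃[L] A)}).ncard :=
      (Set.ncard_pos (Set.toFinite _)).2 hne
    calc k = k * 1 := (mul_one k).symm
      _ ≤ k * _ := Nat.mul_le_mul_left k h1
      _ ≤ d := hbound
  refine ⟨d / k, (Nat.one_le_div_iff hkpos).2 hkd, ?_, ?_⟩
  · calc k * (d / k) = d / k * k := mul_comm _ _
      _ ≤ d := Nat.div_mul_le_self d k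
  · intro B hB r hr c
    obtain ⟨B', hiso, hbound⟩ := main B hB r c
    refine ⟨B', hiso, ?_⟩
    rw [Nat.le_div_iff_mul_le hkpos]
    rw [mul_comm]
    exact hbound
end

section
/- Let 𝒜 be an L-structure, ℬ an L'-structure, and (g, f) a semi-retraction between 𝒜 and ℬ. Call an injection ψ : X → Y between finite subsets of a structure qftp-preserving if every finite tuple from X has the same quantifier-free type as its image tuple under ψ. For an injection h on a structure and a function ψ : X → Y between subsets of its domain, h(ψ) denotes the function from h(X) to h(Y) sending h(x) to h(ψ(x)). Then for all finite tuples ā, b̄ from 𝒜 and c̄ from ℬ, for every qftp-preserving injection v from the range of ā to the range of b̄, and for every qftp-preserving injection ψ from the range of g(b̄) to the range of c̄: (i) the map g(v) from g(range ā) to g(range b̄) is a qftp-preserving injection; (ii) the maps Φ_{b̄,c̄}(ψ) : range b̄ → range f(c̄) defined by b ↦ f(ψ(g(b))), and Φ_{ā,c̄}(ψ ∘ g(v)) : range ā → range f(c̄) defined by a ↦ f(ψ(g(v(a)))), are qftp-preserving injections; and (iii) Φ_{ā,c̄}(ψ ∘ g(v)) = Φ_{b̄,c̄}(ψ) ∘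 v. (Hence (F, G) with F(ā) = g(ā), G(c̄) = f(c̄) and Φ is a pre-adjunction between the categories of finite tuples of 𝒜 and of ℬ with qftp-preserving injections as morphisms.) -/
open FirstOrder FirstOrder.Language

/-- `v` is a qftp-preserving injection from `X` to `Y` (both subsets of a structure `M`):
it is injective on `X`, maps `X` into `Y`, and every finite tuple from `X` has the same
quantifier-free type as its image tuple under `v`. -/
def QftpPreservingBetween (L : FirstOrder.Language) (M : Type*) [L.Structure M]
    (X Y : Set M) (v : M → M) : Prop :=
  Set.InjOn v X ∧ Set.MapsTo v X Y ∧
    ∀ (m : ℕ) (x : Fin m → M), (∀ i, x i ∈ X) → SameQfType L M x (v ∘ x)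

/-- Theorem 6.4 / `adj`: a semi-retraction `(g, f)` between `𝒜` and `ℬ`
yields a pre-adjunction between the categories of finite tuples of `𝒜` and of `ℬ` with
qftp-preserving injections as morphisms.  Concretely: for tuples `ā, b̄` from `𝒜` and `c̄` from
`ℬ`, a qftp-preserving injection `v : ran ā → ran b̄` and a qftp-preserving injection
`ψ : ran g(b̄) → ran c̄`, (i) there is a map `w = g(v) : ran g(ā) → ran g(b̄)` which is a
qftp-preserving injection, (ii) the maps `Φ_{b̄,c̄}(ψ) = f ∘ ψ ∘ g : ran b̄ → ran f(c̄)` and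
`Φ_{ā,c̄}(ψ ∘ w) : ran ā → ran f(c̄)` are qftp-preserving injections, and (iii)
`Φ_{ā,c̄}(ψ ∘ g(v)) = Φ_{b̄,c̄}(ψ) ∘ v` on `ran ā`. -/
theorem semiRetraction_gives_preadjunction_on_tuples
    {L L' : FirstOrder.Language} {M N : Type*} [L.Structure M] [L'.Structure N]
    (g : M → N) (f : N → M)
    (hsr : IsSemiRetraction L L' M N g f)
    {p q s : ℕ} (a : Fin p → M) (b : Fin q → M) (c : Fin s → N)
    (v : M → M) (hv : QftpPreservingBetween L M (Set.range a) (Set.range b) v)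
    (ψ : N → N)
    (hψ : QftpPreservingBetween L' N (Set.range (g ∘ b)) (Set.range c) ψ) :
    ∃ w : N → N,
      -- (i) `w = g(v)` is a qftp-preserving injection from `g(ran ā)` to `g(ran b̄)`
      (∀ x ∈ Set.range a, w (g x) = g (v x)) ∧
      QftpPreservingBetween L' N (Set.range (g ∘ a)) (Set.range (g ∘ b)) w ∧
      -- (ii) `Φ_{b̄,c̄}(ψ)` and `Φ_{ā,c̄}(ψ ∘ w)` are qftp-preserving injections
      QftpPreservingBetween L M (Set.range b) (Set.range (f ∘ c)) (fun x => f (ψ (g x))) ∧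
      QftpPreservingBetween L M (Set.range a) (Set.range (f ∘ c)) (fun x => f (ψ (w (g x)))) ∧
      -- (iii) `Φ_{ā,c̄}(ψ ∘ g(v)) = Φ_{b̄,c̄}(ψ) ∘ v`
      ∀ x ∈ Set.range a, f (ψ (w (g x))) = f (ψ (g (v x))) := by
  classical
  obtain ⟨⟨ginj, gq⟩, ⟨finj, fq⟩, hfg⟩ := hsr
  obtain ⟨vinj, vmaps, vq⟩ := hv
  obtain ⟨ψinj, ψmaps, ψq⟩ := hψ
  -- transitivity / symmetry of SameQfType
  have sqt : ∀ {n : ℕ} {x y z : Fin n → M}, SameQfType L M x y → SameQfType L M y z →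
      SameQfType L M x z := fun h1 h2 φ hφ => (h1 φ hφ).trans (h2 φ hφ)
  set w : N → N := fun y => if h : ∃ i, g (a i) = y then g (v (a h.choose)) else y with hwdef
  have hw : ∀ x ∈ Set.range a, w (g x) = g (v x) := by
    rintro x ⟨i, rfl⟩
    have h : ∃ j, g (a j) = g (a i) := ⟨i, rfl⟩
    have h2 : a h.choose = a i := ginj h.choose_spec
    simp only [hwdef, dif_pos h, h2]
  -- the qftp property of Φ_b = f ∘ ψ ∘ g on range b
  have hΦb : QftpPreservingBetween L M (Set.range b) (Set.range (f ∘ c))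
      (fun x => f (ψ (g x))) := by
    refine ⟨?_, ?_, ?_⟩
    · rintro x ⟨i, rfl⟩ y ⟨j, rfl⟩ hxy
      have h1 : ψ (g (b i)) = ψ (g (b j)) := finj hxy
      have h2 : g (b i) = g (b j) := ψinj ⟨i, rfl⟩ ⟨j, rfl⟩ h1
      exact ginj h2
    · rintro x ⟨i, rfl⟩
      obtain ⟨j, hj⟩ := ψmaps ⟨i, rfl⟩
      exact ⟨j, by simp [hj]⟩
    · intro m x hx
      choose k hk using hx
      have hxk : x = b ∘ k := funext fun i => (hk i).symm
      subst hxk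
      have h1 : SameQfType L M (b ∘ k) (f ∘ g ∘ (b ∘ k)) := hfg m (b ∘ k)
      have h2 : SameQfType L' N (g ∘ (b ∘ k)) (ψ ∘ (g ∘ (b ∘ k))) :=
        ψq m (g ∘ (b ∘ k)) (fun i => ⟨k i, rfl⟩)
      have h3 : SameQfType L M (f ∘ (g ∘ (b ∘ k))) (f ∘ (ψ ∘ (g ∘ (b ∘ k)))) :=
        fq m _ _ h2
      exact sqt h1 h3
  refine ⟨w, hw, ?_, hΦb, ?_, fun x hx => by rw [hw x hx]⟩
  · -- (i): w is qftp-preserving from range (g ∘ a) to range (g ∘ b)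
    refine ⟨?_, ?_, ?_⟩
    · rintro x ⟨i, rfl⟩ y ⟨j, rfl⟩ hxy
      simp only [Function.comp_apply] at hxy ⊢
      rw [hw (a i) ⟨i, rfl⟩, hw (a j) ⟨j, rfl⟩] at hxy
      have := vinj ⟨i, rfl⟩ ⟨j, rfl⟩ (ginj hxy)
      rw [this]
    · rintro x ⟨i, rfl⟩
      simp only [Function.comp_apply]
      rw [hw (a i) ⟨i, rfl⟩]
      obtain ⟨j, hj⟩ := vmaps (⟨i, rfl⟩ : a i ∈ Set.range a)
      exact ⟨j, by simp [hj]⟩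
    · intro m x hx
      choose k hk using hx
      have hxk : x = g ∘ (a ∘ k) := funext fun i => by simp [← hk i]
      subst hxk
      have hwx : w ∘ (g ∘ (a ∘ k)) = g ∘ (v ∘ (a ∘ k)) :=
        funext fun i => hw (a (k i)) ⟨k i, rfl⟩
      rw [hwx]
      exact gq m (a ∘ k) (v ∘ (a ∘ k)) (vq m (a ∘ k) (fun i => ⟨k i, rfl⟩))
  · -- (ii): Φ_a(ψ ∘ w) is qftp-preserving from range a to range (f ∘ c)
    obtain ⟨Φinj, Φmaps, Φq⟩ := hΦb
    refine ⟨?_, ?_, ?_⟩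
    · rintro x ⟨i, rfl⟩ y ⟨j, rfl⟩ hxy
      simp only [hw (a i) ⟨i, rfl⟩, hw (a j) ⟨j, rfl⟩] at hxy
      have h1 := Φinj (vmaps ⟨i, rfl⟩) (vmaps ⟨j, rfl⟩) hxy
      exact vinj ⟨i, rfl⟩ ⟨j, rfl⟩ h1 ▸ rfl
    · rintro x ⟨i, rfl⟩
      simp only [hw (a i) ⟨i, rfl⟩]
      exact Φmaps (vmaps ⟨i, rfl⟩)
    · intro m x hx
      choose k hk using hx
      have hxk : x = a ∘ k := funext fun i => (hk i).symm
      subst hxk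
      have h1 : SameQfType L M (a ∘ k) (v ∘ (a ∘ k)) := vq m (a ∘ k) (fun i => ⟨k i, rfl⟩)
      have h2 : SameQfType L M (v ∘ (a ∘ k))
          ((fun x => f (ψ (g x))) ∘ (v ∘ (a ∘ k))) :=
        Φq m (v ∘ (a ∘ k)) (fun i => vmaps ⟨k i, rfl⟩)
      have heq : ((fun x => f (ψ (w (g x)))) ∘ (a ∘ k)) =
          ((fun x => f (ψ (g x))) ∘ (v ∘ (a ∘ k))) :=
        funext fun i => by simp [hw (a (k i)) ⟨k i, rfl⟩]
      rw [heq]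
      exact sqt h1 h2
end

section
/- Let M be a locally finite L-structure, A a finite substructure of M, and d ≥ 1 an integer. Then the following are equivalent: (a) for every finite substructure B of M and every integer r ≥ 2 there exists a finite substructure C of M such that C →ᵉ (B)^A_{r,d}; (b) for every finite substructure B of M and every integer r ≥ 2, M →ᵉ (B)^A_{r,d}. Likewise, the following are equivalent: (a') for every finite substructure B of M and every integer r ≥ 2 there exists a finite substructure C of M such that C → (B)^A_{r,d}; (b') for every finite substructure B of M and every integer r ≥ 2, M → (B)^A_{r,d}. (Consequently, the Ramsey degree for embeddings and the Ramsey degree for substructures of A in age(M) equal the corresponding small Ramsey degrees of A in M.) -/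
open FirstOrder FirstOrder.Language

/-- `C → (B)^A_{r,d}` computed inside the substructure `C` of `M`: colorings of copies of `A`
lying in `C` admit a copy `B'` of `B` inside `C` on whose copies of `A` at most `d` colors
appear. -/
def ArrowSubIn (L : FirstOrder.Language) (M : Type*) [L.Structure M]
    (C A B : L.Substructure M) (r d : ℕ) : Prop :=
  ∀ c : L.Substructure M → Fin r, ∃ B' : L.Substructure M, B' ≤ C ∧
    Nonempty (B' ≃[L] B) ∧
      (c '' {A' : L.Substructure M | A' ≤ B' ∧ Nonempty (A' ≃[L] A)}).ncard ≤ d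

/-- `C →ᵉ (B)^A_{r,d}` computed inside the substructure `C` of `M`. -/
def ArrowEmbIn (L : FirstOrder.Language) (M : Type*) [L.Structure M]
    (C A B : L.Substructure M) (r d : ℕ) : Prop :=
  ∀ c : (A ↪[L] C) → Fin r, ∃ h : B ↪[L] C,
    (c '' {j : A ↪[L] C | ∃ e : A ↪[L] B, j = h.comp e}).ncard ≤ d


section CompactnessAux

variable {L : FirstOrder.Language} {M : Type*} [L.Structure M]

lemma aux_fg_of_finite (S : L.Substructure M) (h : (S : Set M).Finite) : S.FG :=
  Substructure.fg_def.2 ⟨S, h, Substructure.closure_eq S⟩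

lemma aux_key {r : ℕ} {ι : Type*} (U : Ultrafilter ι) (f : ι → Fin r) :
    ∃ i : Fin r, {C : ι | f C = i} ∈ U := by
  have huniv : (⋃ i ∈ (Set.univ : Set (Fin r)), {C : ι | f C = i}) ∈ U := by
    have : (⋃ i ∈ (Set.univ : Set (Fin r)), {C : ι | f C = i}) = Set.univ := by
      ext C; simp
    rw [this]; exact Filter.univ_mem
  obtain ⟨i, -, hi⟩ := (Ultrafilter.finite_biUnion_mem_iff Set.finite_univ).1 huniv
  exact ⟨i, hi⟩

lemma emb_compactness (hlf : StructLocallyFinite L M) (A B : L.Substructure M)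
    (hA : (A : Set M).Finite) (hB : (B : Set M).Finite) {r d : ℕ} (hr : 1 ≤ r)
    (hM : ArrowEmb L M A B r d) :
    ∃ C : L.Substructure M, (C : Set M).Finite ∧ ArrowEmbIn L M C A B r d := by
  by_contra hcon
  push_neg at hcon
  set ι := {C : L.Substructure M // (C : Set M).Finite} with hι
  have hbad : ∀ C : ι, ∃ cc : (A ↪[L] C.1) → Fin r, ∀ h : B ↪[L] C.1,
      d < (cc '' {j : A ↪[L] C.1 | ∃ e : A ↪[L] B, j = h.comp e}).ncard := by
    intro C
    have := hcon C.1 C.2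
    unfold ArrowEmbIn at this
    push_neg at this
    exact this
  choose cc hcc using hbad
  haveI : Nonempty ι := ⟨⟨⊥, hlf ⊥ Substructure.fg_bot⟩⟩
  haveI : IsDirected ι (· ≤ ·) := ⟨fun C D =>
    ⟨⟨C.1 ⊔ D.1, hlf _ ((aux_fg_of_finite _ C.2).sup (aux_fg_of_finite _ D.2))⟩,
      (le_sup_left : C.1 ≤ C.1 ⊔ D.1), (le_sup_right : D.1 ≤ C.1 ⊔ D.1)⟩⟩
  haveI : (Filter.atTop : Filter ι).NeBot := Filter.atTop_neBot
  set U : Ultrafilter ι := Ultrafilter.of Filter.atTop with hUdef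
  have hU : ∀ D : ι, {C : ι | D ≤ C} ∈ U := fun D =>
    Ultrafilter.of_le Filter.atTop (Filter.mem_atTop D)
  have h0 : 0 < r := hr
  set F : (A ↪[L] M) → ι → Fin r := fun e C =>
    @dite _ (∀ a, e a ∈ C.1) (Classical.dec _)
      (fun he => cc C (FirstOrder.Language.Embedding.codRestrict C.1 e he))
      (fun _ => ⟨0, h0⟩) with hF
  choose col hcol using fun e => aux_key U (F e)
  obtain ⟨h, hh⟩ := hM col
  set S := {j : A ↪[L] M | ∃ e : A ↪[L] B, j = h.comp e} with hS
  haveI : Finite A := hA.to_subtype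
  haveI : Finite B := hB.to_subtype
  haveI : Finite (A ↪[L] B) :=
    Finite.of_injective (fun e => (e : A → B)) DFunLike.coe_injective
  have hSfin : S.Finite := by
    apply Set.Finite.subset (Set.finite_range (fun e : A ↪[L] B => h.comp e))
    rintro j ⟨e, rfl⟩; exact ⟨e, rfl⟩
  have hrangefin : ((h.toHom.range : L.Substructure M) : Set M).Finite := by
    rw [Hom.range_coe]
    exact Set.finite_range _
  set D : ι := ⟨h.toHom.range, hrangefin⟩ with hD
  have hW : ({C : ι | D ≤ C} ∩ ⋂ j ∈ S, {C : ι | F j C = col j}) ∈ U :=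
    Filter.inter_mem (hU D) ((Filter.biInter_mem hSfin).2 fun j _ => hcol j)
  obtain ⟨C, hCD, hCT⟩ := Ultrafilter.nonempty_of_mem hW
  rw [Set.mem_iInter₂] at hCT
  have hmem : ∀ b : B, h b ∈ C.1 := fun b => hCD (h.toHom.mem_range_self b)
  set hC : B ↪[L] C.1 := FirstOrder.Language.Embedding.codRestrict C.1 h hmem with hhC
  have key : ∀ e : A ↪[L] B, cc C (hC.comp e) = col (h.comp e) := by
    intro e
    have hje : (h.comp e) ∈ S := ⟨e, rfl⟩
    have h1 : F (h.comp e) C = col (h.comp e) := hCT _ hje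
    have hall : ∀ a, (h.comp e) a ∈ C.1 := fun a => hmem (e a)
    have h2 : F (h.comp e) C
        = cc C (FirstOrder.Language.Embedding.codRestrict C.1 (h.comp e) hall) := by
      rw [hF]; exact dif_pos hall
    have h3 : FirstOrder.Language.Embedding.codRestrict C.1 (h.comp e) hall = hC.comp e := by
      ext a
      simp [hhC]
      rfl
    rw [← h1, h2, h3]
  have hsub : cc C '' {j : A ↪[L] C.1 | ∃ e : A ↪[L] B, j = hC.comp e} ⊆ col '' S := by
    rintro x ⟨j, ⟨e, rfl⟩, rfl⟩
    exact ⟨h.comp e, ⟨e, rfl⟩, (key e).symm⟩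
  have := hcc C hC
  have hle : (cc C '' {j : A ↪[L] C.1 | ∃ e : A ↪[L] B, j = hC.comp e}).ncard
      ≤ (col '' S).ncard := Set.ncard_le_ncard hsub (hSfin.image col)
  omega

lemma sub_compactness (hlf : StructLocallyFinite L M) (A B : L.Substructure M)
    (hB : (B : Set M).Finite) {r d : ℕ}
    (hM : ArrowSub L M A B r d) :
    ∃ C : L.Substructure M, (C : Set M).Finite ∧ ArrowSubIn L M C A B r d := by
  by_contra hcon
  push_neg at hcon
  set ι := {C : L.Substructure M // (C : Set M).Finite} with hι
  have hbad : ∀ C : ι, ∃ cc : L.Substructure M → Fin r,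
      ∀ B' : L.Substructure M, B' ≤ C.1 → Nonempty (B' ≃[L] B) →
        d < (cc '' {A' : L.Substructure M | A' ≤ B' ∧ Nonempty (A' ≃[L] A)}).ncard := by
    intro C
    have := hcon C.1 C.2
    unfold ArrowSubIn at this
    push_neg at this
    exact this
  choose cc hcc using hbad
  haveI : Nonempty ι := ⟨⟨⊥, hlf ⊥ Substructure.fg_bot⟩⟩
  haveI : IsDirected ι (· ≤ ·) := ⟨fun C D =>
    ⟨⟨C.1 ⊔ D.1, hlf _ ((aux_fg_of_finite _ C.2).sup (aux_fg_of_finite _ D.2))⟩,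
      (le_sup_left : C.1 ≤ C.1 ⊔ D.1), (le_sup_right : D.1 ≤ C.1 ⊔ D.1)⟩⟩
  haveI : (Filter.atTop : Filter ι).NeBot := Filter.atTop_neBot
  set U : Ultrafilter ι := Ultrafilter.of Filter.atTop with hUdef
  have hU : ∀ D : ι, {C : ι | D ≤ C} ∈ U := fun D =>
    Ultrafilter.of_le Filter.atTop (Filter.mem_atTop D)
  choose col hcol using fun A' : L.Substructure M => aux_key U (fun C => cc C A')
  obtain ⟨B', ⟨iso⟩, hh⟩ := hM col
  haveI : Finite B := hB.to_subtype
  haveI : Finite B' := Finite.of_equiv _ iso.toEquiv.symm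
  have hB'fin : (B' : Set M).Finite := Set.toFinite _
  set 𝒜 := {A' : L.Substructure M | A' ≤ B' ∧ Nonempty (A' ≃[L] A)} with h𝒜def
  have h𝒜fin : 𝒜.Finite := by
    have h1 : {A' : L.Substructure M | A' ≤ B'}.Finite := by
      have h2 : {A' : L.Substructure M | A' ≤ B'}
          = SetLike.coe ⁻¹' {t : Set M | t ⊆ (B' : Set M)} := by
        ext A'
        simp [SetLike.coe_subset_coe]
      rw [h2]
      exact hB'fin.finite_subsets.preimage SetLike.coe_injective.injOn
    exact h1.subset fun A' hA' => hA'.1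
  set D : ι := ⟨B', hB'fin⟩ with hD
  have hW : ({C : ι | D ≤ C} ∩ ⋂ A' ∈ 𝒜, {C : ι | cc C A' = col A'}) ∈ U :=
    Filter.inter_mem (hU D) ((Filter.biInter_mem h𝒜fin).2 fun A' _ => hcol A')
  obtain ⟨C, hCD, hCT⟩ := Ultrafilter.nonempty_of_mem hW
  rw [Set.mem_iInter₂] at hCT
  have himg : cc C '' 𝒜 = col '' 𝒜 := Set.image_congr fun A' hA' => hCT A' hA'
  have := hcc C B' hCD ⟨iso⟩
  rw [himg] at this
  omega

end CompactnessAux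

/-- Lemma 2.19 / `compactness_emb_degrees`: for a locally finite structure
`M`, a finite substructure `A` and `d ≥ 1`, the finite-level Ramsey degree statements (both for
embeddings and for substructures) hold among the finite substructures of `M` if and only if the
corresponding small Ramsey degree statements hold in `M` itself. -/
theorem ramsey_degree_age_eq_small_ramsey_degree
    {L : FirstOrder.Language} {M : Type*} [L.Structure M]
    (hlf : StructLocallyFinite L M)
    (A : L.Substructure M) (hAfin : (A : Set M).Finite)
    (d : ℕ) (hd : 1 ≤ d) :
    ((∀ B : L.Substructure M, (B : Set M).Finite → ∀ r : ℕ, 2 ≤ r →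
        ∃ C : L.Substructure M, (C : Set M).Finite ∧ ArrowEmbIn L M C A B r d) ↔
      (∀ B : L.Substructure M, (B : Set M).Finite → ∀ r : ℕ, 2 ≤ r →
        ArrowEmb L M A B r d)) ∧
    ((∀ B : L.Substructure M, (B : Set M).Finite → ∀ r : ℕ, 2 ≤ r →
        ∃ C : L.Substructure M, (C : Set M).Finite ∧ ArrowSubIn L M C A B r d) ↔
      (∀ B : L.Substructure M, (B : Set M).Finite → ∀ r : ℕ, 2 ≤ r →
        ArrowSub L M A B r d)) := by
  constructor
  · constructor
    · intro ha B hBfin r hr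
      obtain ⟨C, hCfin, hC⟩ := ha B hBfin r hr
      intro c
      obtain ⟨h, hh⟩ := hC (fun j => c (C.subtype.comp j))
      refine ⟨C.subtype.comp h, ?_⟩
      have himg : c '' {j : A ↪[L] M | ∃ e : A ↪[L] B, j = (C.subtype.comp h).comp e}
          = (fun j => c (C.subtype.comp j)) ''
            {j : A ↪[L] C | ∃ e : A ↪[L] B, j = h.comp e} := by
        ext x
        constructor
        · rintro ⟨j, ⟨e, rfl⟩, rfl⟩
          exact ⟨h.comp e, ⟨e, rfl⟩, by rw [FirstOrder.Language.Embedding.comp_assoc]⟩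
        · rintro ⟨j, ⟨e, rfl⟩, rfl⟩
          exact ⟨(C.subtype.comp h).comp e, ⟨e, rfl⟩,
            by rw [FirstOrder.Language.Embedding.comp_assoc]⟩
      rw [himg]
      exact hh
    · intro hb B hBfin r hr
      exact emb_compactness hlf A B hAfin hBfin (le_trans one_le_two hr) (hb B hBfin r hr)
  · constructor
    · intro ha B hBfin r hr c
      obtain ⟨C, hCfin, hC⟩ := ha B hBfin r hr
      obtain ⟨B', _, hn, hle⟩ := hC c
      exact ⟨B', hn, hle⟩
    · intro hb B hBfin r hr
      exact sub_compactness hlf A B hBfin (hb B hBfin r hr)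
end

section
/- Let M be a locally finite L-structure and let A, B be finite substructures of M. Then the following are equivalent: (a) for every integer r ≥ 2 there exists a finite substructure C of M such that C → (B)^A_r; (b) for every integer r ≥ 2, M → (B)^A_r. (That is, (A, B) is a Ramsey duo for age(M) if and only if (A, B) is a Ramsey duo for M.) -/
open FirstOrder FirstOrder.Language

/-- Proposition 2.17 / `compactness_duo`: for a locally finite structure `M`
and finite substructures `A, B` of `M`, `(A, B)` is a Ramsey duo for `age(M)` if and only if
`(A, B)` is a Ramsey duo for `M`. -/
theorem ramsey_duo_age_iff_ramsey_duo
    {L : FirstOrder.Language} {M : Type*} [L.Structure M]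
    (hlf : StructLocallyFinite L M)
    (A B : L.Substructure M) (hAfin : (A : Set M).Finite) (hBfin : (B : Set M).Finite) :
    (∀ r : ℕ, 2 ≤ r → ∃ C : L.Substructure M, (C : Set M).Finite ∧ ArrowSubIn L M C A B r 1) ↔
      (∀ r : ℕ, 2 ≤ r → ArrowSub L M A B r 1) := by
  constructor
  · intro h r hr c
    obtain ⟨C, _, hC⟩ := h r hr
    obtain ⟨B', _, hne, hmono⟩ := hC c
    exact ⟨B', hne, hmono⟩
  · intro h r hr
    by_contra hcon
    push_neg at hcon
    -- for each finite substructure, choose a bad coloring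
    have bad : ∀ C : {C : L.Substructure M // (C : Set M).Finite},
        ∃ c : L.Substructure M → Fin r, ∀ B' : L.Substructure M, B' ≤ C.1 →
          Nonempty (B' ≃[L] B) →
          ¬ (c '' {A' : L.Substructure M | A' ≤ B' ∧ Nonempty (A' ≃[L] A)}).ncard ≤ 1 := by
      intro C
      have hC := hcon C.1 C.2
      unfold ArrowSubIn at hC
      push_neg at hC
      obtain ⟨c, hc⟩ := hC
      exact ⟨c, fun B' h1 h2 => not_le.mpr (hc B' h1 h2)⟩
    set ι := {C : L.Substructure M // (C : Set M).Finite} with hι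
    choose badc hbadc using bad
    have hfg : ∀ C : ι, C.1.FG := fun C =>
      Substructure.fg_def.2 ⟨(C.1 : Set M), C.2, Substructure.closure_eq C.1⟩
    haveI : Nonempty ι := ⟨⟨⊥, hlf ⊥ (Substructure.fg_def.2
      ⟨∅, Set.finite_empty, by simp⟩)⟩⟩
    haveI : IsDirected ι (· ≤ ·) := ⟨fun C D => by
      refine ⟨⟨C.1 ⊔ D.1, hlf _ ((hfg C).sup (hfg D))⟩, ?_, ?_⟩
      · exact Subtype.coe_le_coe.1 le_sup_left
      · exact Subtype.coe_le_coe.1 le_sup_right⟩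
    let U : Ultrafilter ι := Ultrafilter.of Filter.atTop
    have hU : (U : Filter ι) ≤ Filter.atTop := Ultrafilter.of_le _
    have hcval : ∀ S : L.Substructure M, ∃ v : Fin r, {C : ι | badc C S = v} ∈ U := by
      intro S
      have huniv : (⋃ v ∈ (Set.univ : Set (Fin r)), {C : ι | badc C S = v}) ∈ U := by
        have : (⋃ v ∈ (Set.univ : Set (Fin r)), {C : ι | badc C S = v}) = Set.univ := by
          ext C; simp
        rw [this]; exact Filter.univ_mem
      obtain ⟨v, _, hv⟩ := (Ultrafilter.finite_biUnion_mem_iff Set.finite_univ).1 huniv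
      exact ⟨v, hv⟩
    choose c hc using hcval
    obtain ⟨B', ⟨e⟩, hmono⟩ := h r hr c
    have hB'fin : (B' : Set M).Finite := by
      rw [← Set.finite_coe_iff]
      have : Finite B := Set.finite_coe_iff.2 hBfin
      exact Finite.of_equiv B e.symm.toEquiv
    have hsub : {S : L.Substructure M | S ≤ B'}.Finite := by
      apply Set.Finite.of_finite_image
        (f := fun S : L.Substructure M => (S : Set M))
      · exact hB'fin.finite_subsets.subset (by
          rintro _ ⟨S, hS, rfl⟩
          exact SetLike.coe_subset_coe.2 hS)
      · exact fun x _ y _ hxy => SetLike.coe_injective hxy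
    have key : ({D : ι | (⟨B', hB'fin⟩ : ι) ≤ D} ∩
        ⋂ S ∈ {S : L.Substructure M | S ≤ B'}, {D : ι | badc D S = c S}) ∈ U := by
      apply Filter.inter_mem
      · exact hU (Filter.mem_atTop _)
      · exact (Filter.biInter_mem hsub).2 fun S _ => hc S
    obtain ⟨D, hD1, hD2⟩ := Ultrafilter.nonempty_of_mem key
    simp only [Set.mem_iInter, Set.mem_setOf_eq] at hD2
    refine hbadc D B' (show B' ≤ D.1 from hD1) ⟨e⟩ ?_
    have himg : badc D '' {A' : L.Substructure M | A' ≤ B' ∧ Nonempty (A' ≃[L] A)} =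
        c '' {A' : L.Substructure M | A' ≤ B' ∧ Nonempty (A' ≃[L] A)} :=
      Set.image_congr fun A' hA' => hD2 A' hA'.1
    rw [himg]
    exact hmono
end
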